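/- arXiv:2204.01378 — 3 statements merged into one kernel-verified Lean document; each statement's English description precedes it below -/
import Mathlib

section
/- Let 1 < β < 2, 1/β + 1/β′ = 1, and let φ : (0,∞) → [0,∞) be measurable with S := sup_{t>0} φ(t) < ∞ and I := ∫₀^∞ e^{−λt} φ(t) dt < ∞, where λ > 0. Then for any δ > 0, ∫₀^δ e^{−λt} t^{−1/2} φ(t) dt ≤ (δ^{1/β − 1/2} / (1−β/2)^{1/β}) · S^{1/β} · I^{1/β′}, obtained by Hölder's inequality splitting t^{−1/2}φ = (t^{−β/2}φ)^{1/β}·φ^{1/β′}; consequently, choosing δ = I/S, one gets ∫₀^∞ e^{−λt} t^{−1/2} φ(t) dt ≤ C · I^{1/2} · S^{1/2} for a constant C depending only on β and λ (combining the analogous estimate on [δ,∞) using β′ > 2). -/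
open Set MeasureTheory Real
open scoped ENNReal

lemma part1 (β β' lam : ℝ) (hβ1 : 1 < β) (hβ2 : β < 2)
    (hconj : 1 / β + 1 / β' = 1) (hlam : 0 < lam)
    (φ : ℝ → ℝ) (hφm : Measurable φ) (hφ0 : ∀ t, 0 < t → 0 ≤ φ t)
    (S I : ℝ) (hS : ∀ t, 0 < t → φ t ≤ S)
    (hI : I = ∫ t in Set.Ioi (0:ℝ), Real.exp (-lam * t) * φ t)
    (hint : IntegrableOn (fun t => Real.exp (-lam * t) * φ t) (Set.Ioi 0))
    (δ : ℝ) (hδ : 0 < δ) :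
    ∫ t in Set.Ioc (0:ℝ) δ, Real.exp (-lam * t) * t ^ (-(1:ℝ)/2) * φ t ≤
      δ ^ (1/β - 1/2) / (1 - β/2) ^ (1/β) * S ^ (1/β) * I ^ (1/β') := by
  have hβ0 : (0:ℝ) < β := by linarith
  have hb : (0:ℝ) < 1 - β/2 := by linarith
  have hS0 : 0 ≤ S := le_trans (hφ0 1 one_pos) (hS 1 one_pos)
  have hβ'0 : (0:ℝ) < β' := by
    have h1 : 1/β < 1 := by rw [div_lt_one hβ0]; linarith
    have : 0 < 1/β' := by linarith
    exact one_div_pos.mp this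
  have hI0 : 0 ≤ I := by
    rw [hI]
    exact setIntegral_nonneg measurableSet_Ioi fun t ht =>
      mul_nonneg (Real.exp_pos _).le (hφ0 t ht)
  have hpq : Real.HolderConjugate β β' := Real.holderConjugate_iff.mpr ⟨hβ1, by rw [inv_eq_one_div, inv_eq_one_div]; exact hconj⟩
  have hmt : Measurable fun t : ℝ => Real.exp (-lam * t) * t ^ (-(1:ℝ)/2) * φ t := by fun_prop
  have hmA : Measurable fun t : ℝ => Real.exp (-lam * t) * t ^ (-β/2) * φ t := by fun_prop
  have hmB : Measurable fun t : ℝ => Real.exp (-lam * t) * φ t := by fun_prop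
  set K : ℝ := S * (δ ^ (1 - β/2) / (1 - β/2)) with hK
  have hK0 : 0 ≤ K := by positivity
  have hnn : 0 ≤ᵐ[volume.restrict (Set.Ioc (0:ℝ) δ)]
      fun t => Real.exp (-lam * t) * t ^ (-(1:ℝ)/2) * φ t := by
    refine (ae_restrict_iff' measurableSet_Ioc).2 (ae_of_all _ fun t ht => ?_)
    exact mul_nonneg (mul_nonneg (Real.exp_pos _).le (Real.rpow_nonneg ht.1.le _)) (hφ0 t ht.1)
  rw [MeasureTheory.integral_eq_lintegral_of_nonneg_ae hnn hmt.aestronglyMeasurable]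
  set f : ℝ → ℝ≥0∞ := fun t =>
    (ENNReal.ofReal (Real.exp (-lam * t) * t ^ (-β/2) * φ t)) ^ (1/β) with hf
  set g : ℝ → ℝ≥0∞ := fun t =>
    (ENNReal.ofReal (Real.exp (-lam * t) * φ t)) ^ (1/β') with hg
  have hfm : AEMeasurable f (volume.restrict (Set.Ioc (0:ℝ) δ)) :=
    (hmA.ennreal_ofReal.pow_const _).aemeasurable
  have hgm : AEMeasurable g (volume.restrict (Set.Ioc (0:ℝ) δ)) :=
    (hmB.ennreal_ofReal.pow_const _).aemeasurable
  have hfβ : ∀ t, f t ^ β = ENNReal.ofReal (Real.exp (-lam * t) * t ^ (-β/2) * φ t) := by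
    intro t
    simp only [hf]
    rw [← ENNReal.rpow_mul, one_div_mul_cancel hβ0.ne', ENNReal.rpow_one]
  have hgβ : ∀ t, g t ^ β' = ENNReal.ofReal (Real.exp (-lam * t) * φ t) := by
    intro t
    simp only [hg]
    rw [← ENNReal.rpow_mul, one_div_mul_cancel hβ'0.ne', ENNReal.rpow_one]
  have hintS : IntegrableOn (fun t : ℝ => S * t ^ (-β/2)) (Set.Ioc 0 δ) := by
    have := intervalIntegral.intervalIntegrable_rpow' (a := 0) (b := δ) (r := -β/2) (by linarith)
    exact ((intervalIntegrable_iff_integrableOn_Ioc_of_le hδ.le).mp this).const_mul S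
  have hintval : ∫ t in Set.Ioc (0:ℝ) δ, S * t ^ (-β/2) = K := by
    rw [MeasureTheory.integral_const_mul, hK]
    congr 1
    rw [← intervalIntegral.integral_of_le hδ.le,
      integral_rpow (Or.inl (by linarith)),
      Real.zero_rpow (by linarith : (0:ℝ) < -β/2 + 1).ne']
    have h2 : -β/2 + 1 = 1 - β/2 := by ring
    rw [h2]; ring
  have h1 : (∫⁻ t in Set.Ioc (0:ℝ) δ, f t ^ β) ≤ ENNReal.ofReal K := by
    calc (∫⁻ t in Set.Ioc (0:ℝ) δ, f t ^ β)
        = ∫⁻ t in Set.Ioc (0:ℝ) δ, ENNReal.ofReal (Real.exp (-lam * t) * t ^ (-β/2) * φ t) := by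
          simp_rw [hfβ]
      _ ≤ ∫⁻ t in Set.Ioc (0:ℝ) δ, ENNReal.ofReal (S * t ^ (-β/2)) := by
          refine setLIntegral_mono (by fun_prop) fun t ht => ?_
          apply ENNReal.ofReal_le_ofReal
          have hE1 : Real.exp (-lam * t) ≤ 1 := by
            rw [Real.exp_le_one_iff]
            nlinarith [mul_pos hlam ht.1]
          have h3 := hS t ht.1
          have h4 := hφ0 t ht.1
          have hT0 := Real.rpow_nonneg ht.1.le (-β/2)
          calc Real.exp (-lam * t) * t ^ (-β/2) * φ t
              ≤ 1 * t ^ (-β/2) * φ t :=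
                mul_le_mul_of_nonneg_right (mul_le_mul_of_nonneg_right hE1 hT0) h4
            _ = t ^ (-β/2) * φ t := by ring
            _ ≤ t ^ (-β/2) * S := mul_le_mul_of_nonneg_left h3 hT0
            _ = S * t ^ (-β/2) := by ring
      _ = ENNReal.ofReal (∫ t in Set.Ioc (0:ℝ) δ, S * t ^ (-β/2)) := by
          rw [← MeasureTheory.ofReal_integral_eq_lintegral_ofReal hintS
            ((ae_restrict_iff' measurableSet_Ioc).2 (ae_of_all _ fun t ht =>
              mul_nonneg hS0 (Real.rpow_nonneg ht.1.le _)))]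
      _ = ENNReal.ofReal K := by rw [hintval]
  have h2 : (∫⁻ t in Set.Ioc (0:ℝ) δ, g t ^ β') ≤ ENNReal.ofReal I := by
    calc (∫⁻ t in Set.Ioc (0:ℝ) δ, g t ^ β')
        = ∫⁻ t in Set.Ioc (0:ℝ) δ, ENNReal.ofReal (Real.exp (-lam * t) * φ t) := by
          simp_rw [hgβ]
      _ ≤ ∫⁻ t in Set.Ioi (0:ℝ), ENNReal.ofReal (Real.exp (-lam * t) * φ t) :=
          lintegral_mono_set Set.Ioc_subset_Ioi_self
      _ = ENNReal.ofReal I := by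
          rw [hI, MeasureTheory.ofReal_integral_eq_lintegral_ofReal hint
            ((ae_restrict_iff' measurableSet_Ioi).2 (ae_of_all _ fun t ht =>
              mul_nonneg (Real.exp_pos _).le (hφ0 t ht)))]
  have hkey : (∫⁻ t in Set.Ioc (0:ℝ) δ,
      ENNReal.ofReal (Real.exp (-lam * t) * t ^ (-(1:ℝ)/2) * φ t)) ≤
      (ENNReal.ofReal K) ^ (1/β) * (ENNReal.ofReal I) ^ (1/β') := by
    have hpw : ∀ t ∈ Set.Ioc (0:ℝ) δ,
        ENNReal.ofReal (Real.exp (-lam * t) * t ^ (-(1:ℝ)/2) * φ t) = (f * g) t := by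
      intro t ht
      have ht0 : 0 < t := ht.1
      have hE0 : (0:ℝ) ≤ Real.exp (-lam * t) := (Real.exp_pos _).le
      have hT0 : (0:ℝ) ≤ t ^ (-β/2) := Real.rpow_nonneg ht0.le _
      have hP0 : 0 ≤ φ t := hφ0 t ht0
      have hA0 : 0 ≤ Real.exp (-lam * t) * t ^ (-β/2) * φ t :=
        mul_nonneg (mul_nonneg hE0 hT0) hP0
      have hB0 : 0 ≤ Real.exp (-lam * t) * φ t := mul_nonneg hE0 hP0
      simp only [Pi.mul_apply, hf, hg]
      rw [ENNReal.ofReal_rpow_of_nonneg hA0 (by positivity),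
        ENNReal.ofReal_rpow_of_nonneg hB0 (by positivity),
        ← ENNReal.ofReal_mul (Real.rpow_nonneg hA0 _)]
      congr 1
      symm
      rw [Real.mul_rpow (mul_nonneg hE0 hT0) hP0, Real.mul_rpow hE0 hT0,
        Real.mul_rpow hE0 hP0]
      have hE : Real.exp (-lam * t) ^ (1/β) * Real.exp (-lam * t) ^ (1/β')
          = Real.exp (-lam * t) := by
        rw [← Real.rpow_add (Real.exp_pos _), hconj, Real.rpow_one]
      have hP : φ t ^ (1/β) * φ t ^ (1/β') = φ t := by
        rw [← Real.rpow_add' hP0 (by rw [hconj]; norm_num), hconj, Real.rpow_one]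
      have hT : (t ^ (-β/2)) ^ (1/β) = t ^ (-(1:ℝ)/2) := by
        rw [← Real.rpow_mul ht0.le]
        congr 1
        field_simp
      calc Real.exp (-lam * t) ^ (1/β) * (t ^ (-β/2)) ^ (1/β) * φ t ^ (1/β) *
            (Real.exp (-lam * t) ^ (1/β') * φ t ^ (1/β'))
          = (t ^ (-β/2)) ^ (1/β) * ((Real.exp (-lam * t) ^ (1/β) * Real.exp (-lam * t) ^ (1/β'))
              * (φ t ^ (1/β) * φ t ^ (1/β'))) := by ring
        _ = Real.exp (-lam * t) * t ^ (-(1:ℝ)/2) * φ t := by rw [hE, hP, hT]; ring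
    calc (∫⁻ t in Set.Ioc (0:ℝ) δ,
          ENNReal.ofReal (Real.exp (-lam * t) * t ^ (-(1:ℝ)/2) * φ t))
        = ∫⁻ t in Set.Ioc (0:ℝ) δ, (f * g) t :=
          setLIntegral_congr_fun measurableSet_Ioc hpw
      _ ≤ (∫⁻ t in Set.Ioc (0:ℝ) δ, f t ^ β) ^ (1/β) *
            (∫⁻ t in Set.Ioc (0:ℝ) δ, g t ^ β') ^ (1/β') :=
          ENNReal.lintegral_mul_le_Lp_mul_Lq _ hpq hfm hgm
      _ ≤ (ENNReal.ofReal K) ^ (1/β) * (ENNReal.ofReal I) ^ (1/β') :=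
          mul_le_mul' (ENNReal.rpow_le_rpow h1 (by positivity))
            (ENNReal.rpow_le_rpow h2 (by positivity))
  have hfin : (ENNReal.ofReal K) ^ (1/β) * (ENNReal.ofReal I) ^ (1/β') ≠ ⊤ := by
    apply ENNReal.mul_ne_top <;>
      exact ENNReal.rpow_ne_top_of_nonneg (by positivity) ENNReal.ofReal_ne_top
  refine le_trans (ENNReal.toReal_mono hfin hkey) ?_
  rw [ENNReal.toReal_mul, ← ENNReal.toReal_rpow, ← ENNReal.toReal_rpow,
    ENNReal.toReal_ofReal hK0, ENNReal.toReal_ofReal hI0]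
  apply le_of_eq
  have hKval : K ^ (1/β) = S ^ (1/β) * (δ ^ (1/β - 1/2) / (1 - β/2) ^ (1/β)) := by
    rw [hK, Real.mul_rpow hS0 (by positivity), Real.div_rpow (by positivity) hb.le,
      ← Real.rpow_mul hδ.le]
    have hne : β ≠ 0 := hβ0.ne'
    have : (1 - β/2) * (1/β) = 1/β - 1/2 := by field_simp
    rw [this]
  rw [hKval]; ring

lemma part2 (β β' lam : ℝ) (hβ1 : 1 < β) (hβ2 : β < 2)
    (hconj : 1 / β + 1 / β' = 1) (hlam : 0 < lam) :
    ∃ C : ℝ, 0 < C ∧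
      ∀ φ : ℝ → ℝ, Measurable φ → (∀ t, 0 < t → 0 ≤ φ t) →
        ∀ S I : ℝ, (∀ t, 0 < t → φ t ≤ S) →
          I = ∫ t in Set.Ioi (0:ℝ), Real.exp (-lam * t) * φ t →
          IntegrableOn (fun t => Real.exp (-lam * t) * φ t) (Set.Ioi 0) →
          ∫ t in Set.Ioi (0:ℝ), Real.exp (-lam * t) * t ^ (-(1:ℝ)/2) * φ t ≤
            C * I ^ ((1:ℝ)/2) * S ^ ((1:ℝ)/2) := by
  have hβ0 : (0:ℝ) < β := by linarith
  have hb : (0:ℝ) < 1 - β/2 := by linarith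
  have hc : (0:ℝ) < (1 - β/2) ^ (1/β) := Real.rpow_pos_of_pos hb _
  refine ⟨1/(1 - β/2) ^ (1/β) + 1, by positivity, ?_⟩
  intro φ hφm hφ0 S I hS hI hint
  have hS0 : 0 ≤ S := le_trans (hφ0 1 one_pos) (hS 1 one_pos)
  have hI0 : 0 ≤ I := by
    rw [hI]
    exact setIntegral_nonneg measurableSet_Ioi fun t ht =>
      mul_nonneg (Real.exp_pos _).le (hφ0 t ht)
  have hmt : Measurable fun t : ℝ => Real.exp (-lam * t) * t ^ (-(1:ℝ)/2) * φ t := by fun_prop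
  have hnnB : 0 ≤ᵐ[volume.restrict (Set.Ioi (0:ℝ))] fun t => Real.exp (-lam * t) * φ t :=
    (ae_restrict_iff' measurableSet_Ioi).2 (ae_of_all _ fun t ht =>
      mul_nonneg (Real.exp_pos _).le (hφ0 t ht))
  by_cases hI' : I = 0
  · have h0 : (fun t => Real.exp (-lam * t) * φ t) =ᵐ[volume.restrict (Set.Ioi (0:ℝ))] 0 :=
      (integral_eq_zero_iff_of_nonneg_ae hnnB hint).1 (hI.symm.trans hI')
    have hz : ∫ t in Set.Ioi (0:ℝ), Real.exp (-lam * t) * t ^ (-(1:ℝ)/2) * φ t = 0 := by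
      apply integral_eq_zero_of_ae
      filter_upwards [h0] with t ht
      have hφt : φ t = 0 := by
        rcases mul_eq_zero.1 ht with h | h
        · exact absurd h (Real.exp_ne_zero _)
        · exact h
      simp [hφt]
    rw [hz, hI', Real.zero_rpow (by norm_num : ((1:ℝ)/2) ≠ 0)]
    simp
  · have hI0' : 0 < I := lt_of_le_of_ne hI0 (Ne.symm hI')
    have hS0' : 0 < S := by
      rcases hS0.lt_or_eq with h | h
      · exact h
      · exfalso; apply hI'
        rw [hI]
        have heq : Set.EqOn (fun t => Real.exp (-lam * t) * φ t) 0 (Set.Ioi (0:ℝ)) := by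
          intro t ht
          have : φ t = 0 := le_antisymm (h ▸ hS t ht) (hφ0 t ht)
          simp [this]
        rw [setIntegral_congr_fun measurableSet_Ioi heq]
        simp
    set δ : ℝ := I / S with hδdef
    have hδ : 0 < δ := div_pos hI0' hS0'
    -- integrability on the two pieces
    have hintS : IntegrableOn (fun t : ℝ => S * t ^ (-(1:ℝ)/2)) (Set.Ioc 0 δ) := by
      have := intervalIntegral.intervalIntegrable_rpow' (a := 0) (b := δ) (r := -(1:ℝ)/2)
        (by norm_num)
      exact ((intervalIntegrable_iff_integrableOn_Ioc_of_le hδ.le).mp this).const_mul S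
    have hbdIoc : ∀ t ∈ Set.Ioc (0:ℝ) δ,
        Real.exp (-lam * t) * t ^ (-(1:ℝ)/2) * φ t ≤ S * t ^ (-(1:ℝ)/2) := by
      intro t ht
      have hE1 : Real.exp (-lam * t) ≤ 1 := by
        rw [Real.exp_le_one_iff]; nlinarith [mul_pos hlam ht.1]
      have hT0 : (0:ℝ) ≤ t ^ (-(1:ℝ)/2) := Real.rpow_nonneg ht.1.le _
      calc Real.exp (-lam * t) * t ^ (-(1:ℝ)/2) * φ t
          ≤ 1 * t ^ (-(1:ℝ)/2) * φ t :=
            mul_le_mul_of_nonneg_right (mul_le_mul_of_nonneg_right hE1 hT0) (hφ0 t ht.1)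
        _ = t ^ (-(1:ℝ)/2) * φ t := by ring
        _ ≤ t ^ (-(1:ℝ)/2) * S := mul_le_mul_of_nonneg_left (hS t ht.1) hT0
        _ = S * t ^ (-(1:ℝ)/2) := by ring
    have h1int : IntegrableOn (fun t => Real.exp (-lam * t) * t ^ (-(1:ℝ)/2) * φ t)
        (Set.Ioc 0 δ) := by
      refine Integrable.mono' hintS hmt.aestronglyMeasurable ?_
      refine (ae_restrict_iff' measurableSet_Ioc).2 (ae_of_all _ fun t ht => ?_)
      rw [Real.norm_eq_abs, abs_of_nonneg (mul_nonneg (mul_nonneg (Real.exp_pos _).le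
        (Real.rpow_nonneg ht.1.le _)) (hφ0 t ht.1))]
      exact hbdIoc t ht
    have hbdIoi : ∀ t ∈ Set.Ioi δ,
        Real.exp (-lam * t) * t ^ (-(1:ℝ)/2) * φ t ≤
          δ ^ (-(1:ℝ)/2) * (Real.exp (-lam * t) * φ t) := by
      intro t ht
      have htδ : δ < t := ht
      have hT : t ^ (-(1:ℝ)/2) ≤ δ ^ (-(1:ℝ)/2) :=
        Real.rpow_le_rpow_of_nonpos hδ htδ.le (by norm_num)
      have hE0 : (0:ℝ) ≤ Real.exp (-lam * t) := (Real.exp_pos _).le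
      have hP0 : 0 ≤ φ t := hφ0 t (hδ.trans htδ)
      calc Real.exp (-lam * t) * t ^ (-(1:ℝ)/2) * φ t
          ≤ Real.exp (-lam * t) * δ ^ (-(1:ℝ)/2) * φ t :=
            mul_le_mul_of_nonneg_right (mul_le_mul_of_nonneg_left hT hE0) hP0
        _ = δ ^ (-(1:ℝ)/2) * (Real.exp (-lam * t) * φ t) := by ring
    have hint2 : IntegrableOn (fun t => δ ^ (-(1:ℝ)/2) * (Real.exp (-lam * t) * φ t))
        (Set.Ioi δ) :=
      (hint.mono_set (Set.Ioi_subset_Ioi hδ.le)).const_mul _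
    have h2int : IntegrableOn (fun t => Real.exp (-lam * t) * t ^ (-(1:ℝ)/2) * φ t)
        (Set.Ioi δ) := by
      refine Integrable.mono' hint2 hmt.aestronglyMeasurable ?_
      refine (ae_restrict_iff' measurableSet_Ioi).2 (ae_of_all _ fun t ht => ?_)
      have ht0 : 0 < t := hδ.trans ht
      rw [Real.norm_eq_abs, abs_of_nonneg (mul_nonneg (mul_nonneg (Real.exp_pos _).le
        (Real.rpow_nonneg ht0.le _)) (hφ0 t ht0))]
      exact hbdIoi t ht
    have hsplit : ∫ t in Set.Ioi (0:ℝ), Real.exp (-lam * t) * t ^ (-(1:ℝ)/2) * φ t =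
        (∫ t in Set.Ioc (0:ℝ) δ, Real.exp (-lam * t) * t ^ (-(1:ℝ)/2) * φ t) +
        ∫ t in Set.Ioi δ, Real.exp (-lam * t) * t ^ (-(1:ℝ)/2) * φ t := by
      rw [← setIntegral_union (Set.Ioc_disjoint_Ioi le_rfl) measurableSet_Ioi h1int h2int,
        Set.Ioc_union_Ioi_eq_Ioi hδ.le]
    have hbd2 : ∫ t in Set.Ioi δ, Real.exp (-lam * t) * t ^ (-(1:ℝ)/2) * φ t ≤
        δ ^ (-(1:ℝ)/2) * I := by
      calc ∫ t in Set.Ioi δ, Real.exp (-lam * t) * t ^ (-(1:ℝ)/2) * φ t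
          ≤ ∫ t in Set.Ioi δ, δ ^ (-(1:ℝ)/2) * (Real.exp (-lam * t) * φ t) :=
            setIntegral_mono_on h2int hint2 measurableSet_Ioi hbdIoi
        _ = δ ^ (-(1:ℝ)/2) * ∫ t in Set.Ioi δ, Real.exp (-lam * t) * φ t := by
            rw [integral_const_mul]
        _ ≤ δ ^ (-(1:ℝ)/2) * I := by
            refine mul_le_mul_of_nonneg_left ?_ (Real.rpow_nonneg hδ.le _)
            rw [hI]
            exact setIntegral_mono_set hint hnnB
              (HasSubset.Subset.eventuallyLE (Set.Ioi_subset_Ioi hδ.le))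
    have hbd1 := part1 β β' lam hβ1 hβ2 hconj hlam φ hφm hφ0 S I hS hI hint δ hδ
    -- the algebra
    have hIe : I ^ ((1:ℝ)/β - 1/2) * I ^ ((1:ℝ)/β') = I ^ ((1:ℝ)/2) := by
      rw [← Real.rpow_add hI0']; congr 1; linarith
    have hSe : S ^ ((1:ℝ)/β) / S ^ ((1:ℝ)/β - 1/2) = S ^ ((1:ℝ)/2) := by
      rw [← Real.rpow_sub hS0']; congr 1; ring
    have key1 : δ ^ ((1:ℝ)/β - 1/2) * S ^ ((1:ℝ)/β) * I ^ ((1:ℝ)/β') =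
        I ^ ((1:ℝ)/2) * S ^ ((1:ℝ)/2) := by
      calc δ ^ ((1:ℝ)/β - 1/2) * S ^ ((1:ℝ)/β) * I ^ ((1:ℝ)/β')
          = (I ^ ((1:ℝ)/β - 1/2) / S ^ ((1:ℝ)/β - 1/2)) * S ^ ((1:ℝ)/β) * I ^ ((1:ℝ)/β') := by
            rw [hδdef, Real.div_rpow hI0 hS0]
        _ = (I ^ ((1:ℝ)/β - 1/2) * I ^ ((1:ℝ)/β')) *
              (S ^ ((1:ℝ)/β) / S ^ ((1:ℝ)/β - 1/2)) := by ring
        _ = I ^ ((1:ℝ)/2) * S ^ ((1:ℝ)/2) := by rw [hIe, hSe]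
    have key2 : δ ^ (-(1:ℝ)/2) * I = I ^ ((1:ℝ)/2) * S ^ ((1:ℝ)/2) := by
      have hd : δ ^ (-(1:ℝ)/2) = S ^ ((1:ℝ)/2) / I ^ ((1:ℝ)/2) := by
        rw [hδdef, show (-(1:ℝ)/2) = -((1:ℝ)/2) by norm_num,
          Real.rpow_neg (div_nonneg hI0 hS0), Real.div_rpow hI0 hS0, inv_div]
      have hII : I / I ^ ((1:ℝ)/2) = I ^ ((1:ℝ)/2) := by
        nth_rewrite 1 [← Real.rpow_one I]
        rw [← Real.rpow_sub hI0']; norm_num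
      rw [hd, div_mul_eq_mul_div, mul_div_assoc, hII]; ring
    calc ∫ t in Set.Ioi (0:ℝ), Real.exp (-lam * t) * t ^ (-(1:ℝ)/2) * φ t
        = (∫ t in Set.Ioc (0:ℝ) δ, Real.exp (-lam * t) * t ^ (-(1:ℝ)/2) * φ t) +
            ∫ t in Set.Ioi δ, Real.exp (-lam * t) * t ^ (-(1:ℝ)/2) * φ t := hsplit
      _ ≤ (δ ^ (1/β - 1/2) / (1 - β/2) ^ (1/β) * S ^ (1/β) * I ^ (1/β')) +
            δ ^ (-(1:ℝ)/2) * I := add_le_add hbd1 hbd2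
      _ = (1/(1 - β/2) ^ (1/β)) * (δ ^ ((1:ℝ)/β - 1/2) * S ^ ((1:ℝ)/β) * I ^ ((1:ℝ)/β')) +
            δ ^ (-(1:ℝ)/2) * I := by ring
      _ = (1/(1 - β/2) ^ (1/β)) * (I ^ ((1:ℝ)/2) * S ^ ((1:ℝ)/2)) +
            I ^ ((1:ℝ)/2) * S ^ ((1:ℝ)/2) := by rw [key1, key2]
      _ = (1/(1 - β/2) ^ (1/β) + 1) * I ^ ((1:ℝ)/2) * S ^ ((1:ℝ)/2) := by ring


/-- Hedberg-type splitting lemma. For `1 < β < 2` with conjugate `β'`,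
`λ > 0`, and a nonnegative measurable `φ` on `(0,∞)` with supremum bound `S` and
`I = ∫₀^∞ e^{-λ t} φ(t) dt`, Hölder's inequality gives for every `δ > 0`
`∫₀^δ e^{-λ t} t^{-1/2} φ(t) dt ≤ δ^{1/β - 1/2} / (1-β/2)^{1/β} · S^{1/β} · I^{1/β'}`;
consequently (choosing `δ = I/S` and treating `[δ,∞)` symmetrically with `β' > 2`)
there is a constant `C`, depending only on `β` and `λ`, with
`∫₀^∞ e^{-λ t} t^{-1/2} φ(t) dt ≤ C · I^{1/2} · S^{1/2}`. -/
theorem stmt6 (β β' lam : ℝ) (hβ1 : 1 < β) (hβ2 : β < 2)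
    (hconj : 1 / β + 1 / β' = 1) (hlam : 0 < lam) :
    (∀ φ : ℝ → ℝ, Measurable φ → (∀ t, 0 < t → 0 ≤ φ t) →
      ∀ S I : ℝ, (∀ t, 0 < t → φ t ≤ S) →
        I = ∫ t in Set.Ioi (0:ℝ), Real.exp (-lam * t) * φ t →
        IntegrableOn (fun t => Real.exp (-lam * t) * φ t) (Set.Ioi 0) →
        ∀ δ : ℝ, 0 < δ →
          ∫ t in Set.Ioc (0:ℝ) δ, Real.exp (-lam * t) * t ^ (-(1:ℝ)/2) * φ t ≤
            δ ^ (1/β - 1/2) / (1 - β/2) ^ (1/β) * S ^ (1/β) * I ^ (1/β')) ∧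
    (∃ C : ℝ, 0 < C ∧
      ∀ φ : ℝ → ℝ, Measurable φ → (∀ t, 0 < t → 0 ≤ φ t) →
        ∀ S I : ℝ, (∀ t, 0 < t → φ t ≤ S) →
          I = ∫ t in Set.Ioi (0:ℝ), Real.exp (-lam * t) * φ t →
          IntegrableOn (fun t => Real.exp (-lam * t) * φ t) (Set.Ioi 0) →
          ∫ t in Set.Ioi (0:ℝ), Real.exp (-lam * t) * t ^ (-(1:ℝ)/2) * φ t ≤
            C * I ^ ((1:ℝ)/2) * S ^ ((1:ℝ)/2)) := by
  exact ⟨fun φ hφm hφ0 S I hS hI hint δ hδ =>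
    part1 β β' lam hβ1 hβ2 hconj hlam φ hφm hφ0 S I hS hI hint δ hδ,
    part2 β β' lam hβ1 hβ2 hconj hlam⟩
end

section
/- Suppose d > 4, the resolvent density satisfies g_λ(x,y) ≤ c₆ ϱ(x,y)^{2−d} for all x,y ∈ M, and μ(B(x,r)) ≤ c₇ r^d for all x ∈ M, r > 0. Then for all x, z ∈ M: ∫_M ϱ(x,y)^{2−d} ϱ(y,z)^{2−d} dμ(y) ≤ C ϱ(x,z)^{4−d} with C depending only on c₇ and d; consequently ‖G_λ ν‖²_{L²(M)} ≤ C′ ∬ ϱ(x,z)^{4−d} dν(z) dν(x) for every nonnegative Radon measure ν. -/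
open Set MeasureTheory ENNReal Metric Filter

private lemma erpow_anti {a b : ℝ≥0∞} {c : ℝ} (hab : a ≤ b) (hc : c ≤ 0) :
    b ^ c ≤ a ^ c := by
  rw [← neg_neg c, ENNReal.rpow_neg b, ENNReal.rpow_neg a]
  exact ENNReal.inv_le_inv.mpr (ENNReal.rpow_le_rpow hab (neg_nonneg.mpr hc))

section Helpers

variable {M : Type*} [MetricSpace M] [MeasurableSpace M]
variable {μ : Measure M} {d c₇ : ℝ}

private lemma mu_singleton (hd : 0 < d)
    (hvol : ∀ (x : M) (r : ℝ), 0 < r → μ (Metric.ball x r) ≤ ENNReal.ofReal (c₇ * r ^ d))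
    (x : M) : μ {x} = 0 := by
  refine le_antisymm ?_ zero_le
  have h1 : ∀ n : ℕ, μ {x} ≤ ENNReal.ofReal (c₇ * (((n : ℝ) + 1)⁻¹) ^ d) := by
    intro n
    refine le_trans (measure_mono ?_) (hvol x _ (by positivity))
    intro y hy
    rcases hy with rfl
    exact Metric.mem_ball_self (by positivity)
  have h2 : Tendsto (fun n : ℕ => ENNReal.ofReal (c₇ * (((n : ℝ) + 1)⁻¹) ^ d))
      atTop (nhds 0) := by
    have h3 : Tendsto (fun n : ℕ => ((n : ℝ) + 1)⁻¹) atTop (nhds 0) := by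
      exact tendsto_one_div_add_atTop_nhds_zero_nat.congr (fun n => one_div _)
    have h4 : Tendsto (fun t : ℝ => ENNReal.ofReal (c₇ * t ^ d)) (nhds 0) (nhds 0) := by
      have h5 : ContinuousAt (fun t : ℝ => t ^ d) 0 :=
        Real.continuousAt_rpow_const 0 d (Or.inr hd.le)
      have h6 : Tendsto (fun t : ℝ => c₇ * t ^ d) (nhds 0) (nhds (c₇ * (0:ℝ) ^ d)) :=
        (h5.tendsto).const_mul c₇
      rw [Real.zero_rpow hd.ne', mul_zero] at h6
      simpa [Function.comp_def] using (ENNReal.continuous_ofReal.tendsto 0).comp h6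
    exact h4.comp h3
  exact ge_of_tendsto' h2 h1

private lemma annulus_est
    (hvol : ∀ (x : M) (r : ℝ), 0 < r → μ (Metric.ball x r) ≤ ENNReal.ofReal (c₇ * r ^ d))
    (x : M) {s r a : ℝ} (hs : 0 < s) (hr : 0 < r) (ha : a ≤ 0) :
    ∫⁻ y in Metric.ball x r \ Metric.ball x s, edist x y ^ a ∂μ ≤
      ENNReal.ofReal (s ^ a * (c₇ * r ^ d)) := by
  have h1 : ∀ y ∈ Metric.ball x r \ Metric.ball x s,
      edist x y ^ a ≤ ENNReal.ofReal (s ^ a) := by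
    intro y hy
    have h2 : ENNReal.ofReal s ≤ edist x y := by
      rw [edist_dist]
      exact ENNReal.ofReal_le_ofReal (by
        have := hy.2
        rw [Metric.mem_ball] at this
        push_neg at this
        simpa [dist_comm] using this)
    calc edist x y ^ a ≤ (ENNReal.ofReal s) ^ a := erpow_anti h2 ha
      _ = ENNReal.ofReal (s ^ a) := (ENNReal.ofReal_rpow_of_pos hs)
  calc ∫⁻ y in Metric.ball x r \ Metric.ball x s, edist x y ^ a ∂μ
      ≤ ∫⁻ _ in Metric.ball x r \ Metric.ball x s, ENNReal.ofReal (s ^ a) ∂μ :=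
        setLIntegral_mono measurable_const h1
    _ = ENNReal.ofReal (s ^ a) * μ (Metric.ball x r \ Metric.ball x s) :=
        setLIntegral_const _ _
    _ ≤ ENNReal.ofReal (s ^ a) * ENNReal.ofReal (c₇ * r ^ d) :=
        mul_le_mul_right (le_trans (measure_mono diff_subset) (hvol x r hr)) _
    _ = ENNReal.ofReal (s ^ a * (c₇ * r ^ d)) :=
        (ENNReal.ofReal_mul (by positivity)).symm

private lemma tsum_ofReal_geom {C q : ℝ} (hC : 0 ≤ C) (hq : 0 < q) (hq1 : q < 1) :
    (∑' k : ℕ, ENNReal.ofReal (C * q ^ k)) = ENNReal.ofReal (C * (1 - q)⁻¹) := by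
  have h1 : ∀ k : ℕ, ENNReal.ofReal (C * q ^ k)
      = ENNReal.ofReal C * (ENNReal.ofReal q) ^ k := by
    intro k
    rw [ENNReal.ofReal_mul hC, ENNReal.ofReal_pow hq.le]
  simp_rw [h1]
  rw [ENNReal.tsum_mul_left, ENNReal.tsum_geometric]
  have h2 : (1 : ℝ≥0∞) - ENNReal.ofReal q = ENNReal.ofReal (1 - q) := by
    rw [ENNReal.ofReal_sub 1 hq.le, ENNReal.ofReal_one]
  rw [h2, ← ENNReal.ofReal_inv_of_pos (by linarith), ← ENNReal.ofReal_mul hC]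

private lemma near_cover (x : M) {R : ℝ} :
    Metric.ball x R ⊆ {x} ∪ ⋃ k : ℕ,
      (Metric.ball x (R * 2 ^ (-(k:ℝ))) \ Metric.ball x (R * 2 ^ (-((k:ℝ)+1)))) := by
  intro y hy
  rcases eq_or_ne y x with rfl | hyx
  · exact Or.inl rfl
  right
  have ht : 0 < dist y x := dist_pos.mpr hyx
  have htR : dist y x < R := Metric.mem_ball.mp hy
  obtain ⟨k, hk1, hk2⟩ : ∃ k : ℕ, (2:ℝ) ^ k < R / dist y x ∧ R / dist y x ≤ 2 ^ (k+1) := by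
    have hex : ∃ n : ℕ, R / dist y x ≤ 2 ^ n := by
      obtain ⟨n, hn⟩ := pow_unbounded_of_one_lt (R / dist y x) (one_lt_two (α := ℝ))
      exact ⟨n, hn.le⟩
    have hn0 : Nat.find hex ≠ 0 := by
      intro h0
      have h := Nat.find_spec hex
      rw [h0] at h
      simp at h
      have h' : 1 < R / dist y x := (one_lt_div ht).mpr htR
      linarith
    refine ⟨Nat.find hex - 1, ?_, ?_⟩
    · have := Nat.find_min hex (m := Nat.find hex - 1) (by omega)
      push_neg at this
      exact this
    · have h1 : Nat.find hex - 1 + 1 = Nat.find hex := by omega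
      rw [h1]
      exact Nat.find_spec hex
  have hpow : ∀ m : ℕ, (2:ℝ) ^ (-(m:ℝ)) = ((2:ℝ) ^ m)⁻¹ := by
    intro m
    rw [Real.rpow_neg two_pos.le, Real.rpow_natCast]
  refine mem_iUnion.mpr ⟨k, ⟨?_, ?_⟩⟩
  · rw [Metric.mem_ball, hpow k, ← div_eq_mul_inv, lt_div_iff₀ (by positivity)]
    rw [lt_div_iff₀ ht] at hk1
    linarith
  · rw [Metric.mem_ball, not_lt]
    have h3 : (2:ℝ) ^ (-((k:ℝ)+1)) = ((2:ℝ) ^ (k+1))⁻¹ := by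
      rw [show -((k:ℝ)+1) = -(((k+1:ℕ)):ℝ) by push_cast; ring, hpow (k+1)]
    rw [h3, ← div_eq_mul_inv, div_le_iff₀ (by positivity)]
    rw [div_le_iff₀ ht] at hk2
    linarith

private lemma far_cover (x : M) {R : ℝ} (hR : 0 < R) :
    (Metric.ball x R)ᶜ ⊆ ⋃ k : ℕ,
      (Metric.ball x (R * 2 ^ ((k:ℝ)+1)) \ Metric.ball x (R * 2 ^ (k:ℝ))) := by
  intro y hy
  have ht : R ≤ dist y x := by
    have := hy
    rw [mem_compl_iff, Metric.mem_ball, not_lt] at this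
    exact this
  have ht0 : 0 < dist y x := lt_of_lt_of_le hR ht
  obtain ⟨k, hk1, hk2⟩ : ∃ k : ℕ, (2:ℝ) ^ k ≤ dist y x / R ∧ dist y x / R < 2 ^ (k+1) := by
    have hex : ∃ n : ℕ, dist y x / R < 2 ^ n := by
      exact pow_unbounded_of_one_lt (dist y x / R) (one_lt_two (α := ℝ))
    have hn0 : Nat.find hex ≠ 0 := by
      intro h0
      have h := Nat.find_spec hex
      rw [h0] at h
      simp at h
      have h' : 1 ≤ dist y x / R := (one_le_div hR).mpr ht
      linarith
    refine ⟨Nat.find hex - 1, ?_, ?_⟩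
    · have := Nat.find_min hex (m := Nat.find hex - 1) (by omega)
      push_neg at this
      exact this
    · have h1 : Nat.find hex - 1 + 1 = Nat.find hex := by omega
      rw [h1]
      exact Nat.find_spec hex
  have hpow : ∀ m : ℕ, (2:ℝ) ^ ((m:ℝ)) = ((2:ℝ) ^ m) := by
    intro m
    rw [Real.rpow_natCast]
  refine mem_iUnion.mpr ⟨k, ⟨?_, ?_⟩⟩
  · rw [Metric.mem_ball]
    have h3 : (2:ℝ) ^ ((k:ℝ)+1) = ((2:ℝ) ^ (k+1)) := by
      rw [show (k:ℝ)+1 = (((k+1:ℕ)):ℝ) by push_cast; ring, hpow (k+1)]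
    rw [h3]
    rw [div_lt_iff₀ hR] at hk2
    linarith
  · rw [Metric.mem_ball, not_lt, hpow k]
    rw [le_div_iff₀ hR] at hk1
    linarith

private lemma near_est (hd : 0 < d) (hc₇ : 0 < c₇)
    (hvol : ∀ (x : M) (r : ℝ), 0 < r → μ (Metric.ball x r) ≤ ENNReal.ofReal (c₇ * r ^ d))
    (x : M) {R a : ℝ} (hR : 0 < R) (had : 0 < a + d) (ha : a < 0) :
    ∫⁻ y in Metric.ball x R, edist x y ^ a ∂μ ≤
      ENNReal.ofReal ((c₇ * 2 ^ (-a) * R ^ (a + d)) * (1 - (2:ℝ) ^ (-(a+d)))⁻¹) := by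
  have h2 : (0:ℝ) < 2 := two_pos
  have hq : 0 < (2:ℝ) ^ (-(a+d)) := Real.rpow_pos_of_pos h2 _
  have hq1 : (2:ℝ) ^ (-(a+d)) < 1 :=
    Real.rpow_lt_one_of_one_lt_of_neg one_lt_two (by linarith)
  have key : ∀ k : ℕ, (R * 2 ^ (-((k:ℝ)+1))) ^ a * (c₇ * (R * 2 ^ (-(k:ℝ))) ^ d)
      = (c₇ * 2 ^ (-a) * R ^ (a + d)) * ((2:ℝ) ^ (-(a+d))) ^ k := by
    intro k
    rw [Real.mul_rpow hR.le (Real.rpow_nonneg h2.le _),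
        Real.mul_rpow hR.le (Real.rpow_nonneg h2.le _),
        ← Real.rpow_natCast ((2:ℝ) ^ (-(a+d))) k,
        ← Real.rpow_mul h2.le, ← Real.rpow_mul h2.le, ← Real.rpow_mul h2.le,
        Real.rpow_add hR]
    have e1 : (2:ℝ) ^ (-((k:ℝ)+1) * a) * (2:ℝ) ^ (-(k:ℝ) * d)
        = (2:ℝ) ^ (-a) * (2:ℝ) ^ (-(a+d) * (k:ℝ)) := by
      rw [← Real.rpow_add h2, ← Real.rpow_add h2]
      congr 1
      ring
    calc R ^ a * (2:ℝ) ^ (-((k:ℝ)+1) * a) * (c₇ * (R ^ d * (2:ℝ) ^ (-(k:ℝ) * d)))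
        = ((2:ℝ) ^ (-((k:ℝ)+1) * a) * (2:ℝ) ^ (-(k:ℝ) * d)) * (c₇ * (R ^ a * R ^ d)) := by
          ring
      _ = ((2:ℝ) ^ (-a) * (2:ℝ) ^ (-(a+d) * (k:ℝ))) * (c₇ * (R ^ a * R ^ d)) := by rw [e1]
      _ = c₇ * 2 ^ (-a) * (R ^ a * R ^ d) * (2:ℝ) ^ (-(a+d) * (k:ℝ)) := by ring
  calc ∫⁻ y in Metric.ball x R, edist x y ^ a ∂μ
      ≤ ∫⁻ y in ({x} ∪ ⋃ k : ℕ,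
          (Metric.ball x (R * 2 ^ (-(k:ℝ))) \ Metric.ball x (R * 2 ^ (-((k:ℝ)+1))))),
          edist x y ^ a ∂μ := lintegral_mono_set (near_cover x)
    _ ≤ (∫⁻ y in ({x} : Set M), edist x y ^ a ∂μ) + ∫⁻ y in (⋃ k : ℕ,
          (Metric.ball x (R * 2 ^ (-(k:ℝ))) \ Metric.ball x (R * 2 ^ (-((k:ℝ)+1))))),
          edist x y ^ a ∂μ := lintegral_union_le _ _ _
    _ = ∫⁻ y in (⋃ k : ℕ,
          (Metric.ball x (R * 2 ^ (-(k:ℝ))) \ Metric.ball x (R * 2 ^ (-((k:ℝ)+1))))),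
          edist x y ^ a ∂μ := by
        rw [Measure.restrict_eq_zero.mpr (mu_singleton hd hvol x), lintegral_zero_measure,
          zero_add]
    _ ≤ ∑' k : ℕ, ∫⁻ y in
          (Metric.ball x (R * 2 ^ (-(k:ℝ))) \ Metric.ball x (R * 2 ^ (-((k:ℝ)+1)))),
          edist x y ^ a ∂μ := lintegral_iUnion_le _ _
    _ ≤ ∑' k : ℕ, ENNReal.ofReal
          ((R * 2 ^ (-((k:ℝ)+1))) ^ a * (c₇ * (R * 2 ^ (-(k:ℝ))) ^ d)) := by
        refine ENNReal.tsum_le_tsum fun k => annulus_est hvol x (by positivity)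
          (by positivity) ha.le
    _ = ∑' k : ℕ, ENNReal.ofReal
          ((c₇ * 2 ^ (-a) * R ^ (a + d)) * ((2:ℝ) ^ (-(a+d))) ^ k) := by
        exact tsum_congr fun k => by rw [key k]
    _ = ENNReal.ofReal ((c₇ * 2 ^ (-a) * R ^ (a + d)) * (1 - (2:ℝ) ^ (-(a+d)))⁻¹) :=
        tsum_ofReal_geom (by positivity) hq hq1

private lemma far_est (hd : 0 < d) (hc₇ : 0 < c₇)
    (hvol : ∀ (x : M) (r : ℝ), 0 < r → μ (Metric.ball x r) ≤ ENNReal.ofReal (c₇ * r ^ d))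
    (x : M) {R b : ℝ} (hR : 0 < R) (hbd : b + d < 0) (hb : b ≤ 0) :
    ∫⁻ y in (Metric.ball x R)ᶜ, edist x y ^ b ∂μ ≤
      ENNReal.ofReal ((c₇ * 2 ^ d * R ^ (b + d)) * (1 - (2:ℝ) ^ (b+d))⁻¹) := by
  have h2 : (0:ℝ) < 2 := two_pos
  have hq : 0 < (2:ℝ) ^ (b+d) := Real.rpow_pos_of_pos h2 _
  have hq1 : (2:ℝ) ^ (b+d) < 1 :=
    Real.rpow_lt_one_of_one_lt_of_neg one_lt_two hbd
  have key : ∀ k : ℕ, (R * 2 ^ ((k:ℝ))) ^ b * (c₇ * (R * 2 ^ ((k:ℝ)+1)) ^ d)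
      = (c₇ * 2 ^ d * R ^ (b + d)) * ((2:ℝ) ^ (b+d)) ^ k := by
    intro k
    rw [Real.mul_rpow hR.le (Real.rpow_nonneg h2.le _),
        Real.mul_rpow hR.le (Real.rpow_nonneg h2.le _),
        ← Real.rpow_natCast ((2:ℝ) ^ (b+d)) k,
        ← Real.rpow_mul h2.le, ← Real.rpow_mul h2.le, ← Real.rpow_mul h2.le,
        Real.rpow_add hR]
    have e1 : (2:ℝ) ^ ((k:ℝ) * b) * (2:ℝ) ^ (((k:ℝ)+1) * d)
        = (2:ℝ) ^ (d:ℝ) * (2:ℝ) ^ ((b+d) * (k:ℝ)) := by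
      rw [← Real.rpow_add h2, ← Real.rpow_add h2]
      congr 1
      ring
    calc R ^ b * (2:ℝ) ^ ((k:ℝ) * b) * (c₇ * (R ^ d * (2:ℝ) ^ (((k:ℝ)+1) * d)))
        = ((2:ℝ) ^ ((k:ℝ) * b) * (2:ℝ) ^ (((k:ℝ)+1) * d)) * (c₇ * (R ^ b * R ^ d)) := by
          ring
      _ = ((2:ℝ) ^ (d:ℝ) * (2:ℝ) ^ ((b+d) * (k:ℝ))) * (c₇ * (R ^ b * R ^ d)) := by rw [e1]
      _ = c₇ * 2 ^ (d:ℝ) * (R ^ b * R ^ d) * (2:ℝ) ^ ((b+d) * (k:ℝ)) := by ring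
  calc ∫⁻ y in (Metric.ball x R)ᶜ, edist x y ^ b ∂μ
      ≤ ∫⁻ y in (⋃ k : ℕ,
          (Metric.ball x (R * 2 ^ ((k:ℝ)+1)) \ Metric.ball x (R * 2 ^ ((k:ℝ))))),
          edist x y ^ b ∂μ := lintegral_mono_set (far_cover x hR)
    _ ≤ ∑' k : ℕ, ∫⁻ y in
          (Metric.ball x (R * 2 ^ ((k:ℝ)+1)) \ Metric.ball x (R * 2 ^ ((k:ℝ)))),
          edist x y ^ b ∂μ := lintegral_iUnion_le _ _
    _ ≤ ∑' k : ℕ, ENNReal.ofReal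
          ((R * 2 ^ ((k:ℝ))) ^ b * (c₇ * (R * 2 ^ ((k:ℝ)+1)) ^ d)) := by
        refine ENNReal.tsum_le_tsum fun k => annulus_est hvol x (by positivity)
          (by positivity) hb
    _ = ∑' k : ℕ, ENNReal.ofReal
          ((c₇ * 2 ^ d * R ^ (b + d)) * ((2:ℝ) ^ (b+d)) ^ k) := by
        exact tsum_congr fun k => by rw [key k]
    _ = ENNReal.ofReal ((c₇ * 2 ^ d * R ^ (b + d)) * (1 - (2:ℝ) ^ (b+d))⁻¹) :=
        tsum_ofReal_geom (by positivity) hq hq1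

end Helpers

/-- if `d > 4`, the resolvent density satisfies
`g_λ(x,y) ≤ c₆ ϱ(x,y)^{2-d}` and `μ(B(x,r)) ≤ c₇ r^d`, then the Riesz convolution
estimate `∫ ϱ(x,y)^{2-d} ϱ(y,z)^{2-d} dμ(y) ≤ C ϱ(x,z)^{4-d}` holds with `C`
depending only on `c₇` and `d`; consequently
`‖G_λ ν‖²_{L²(M)} ≤ C' ∬ ϱ(x,z)^{4-d} dν dν` for every nonnegative Radon measure `ν`. -/
theorem stmt12 {M : Type*} [MetricSpace M] [MeasurableSpace M] [BorelSpace M]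
    (μ : Measure M) (g : M → M → ℝ≥0∞) (d c₆ c₇ : ℝ)
    (hd : 4 < d) (hc₆ : 0 < c₆) (hc₇ : 0 < c₇)
    (hg : ∀ x y : M, g x y ≤ ENNReal.ofReal c₆ * edist x y ^ (2 - d))
    (hvol : ∀ (x : M) (r : ℝ), 0 < r → μ (Metric.ball x r) ≤ ENNReal.ofReal (c₇ * r ^ d)) :
    (∃ C : ℝ, 0 < C ∧ ∀ x z : M,
      ∫⁻ y, edist x y ^ (2 - d) * edist y z ^ (2 - d) ∂μ ≤
        ENNReal.ofReal C * edist x z ^ (4 - d)) ∧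
    (∃ C' : ℝ, 0 < C' ∧ ∀ ν : Measure M, ν.InnerRegular →
      ∫⁻ x, (∫⁻ y, g x y ∂ν) ^ (2:ℕ) ∂μ ≤
        ENNReal.ofReal C' * ∫⁻ x, ∫⁻ z, edist x z ^ (4 - d) ∂ν ∂ν) := by
  have hd0 : (0:ℝ) < d := by linarith
  -- the constant for the half-space estimate
  set K₁ : ℝ := c₇ * 2 ^ (d-2) * 2 ^ (d-2) * (1 - (2:ℝ) ^ (-(2:ℝ)))⁻¹ with hK₁def
  set K₂ : ℝ := c₇ * 2 ^ (d:ℝ) * (1 - (2:ℝ) ^ ((4:ℝ)-d))⁻¹ with hK₂def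
  have hc1 : (0:ℝ) < 1 - (2:ℝ) ^ (-(2:ℝ)) := by
    have := Real.rpow_lt_one_of_one_lt_of_neg (one_lt_two (α := ℝ)) (show -(2:ℝ) < 0 by norm_num)
    linarith
  have hc2 : (0:ℝ) < 1 - (2:ℝ) ^ ((4:ℝ)-d) := by
    have := Real.rpow_lt_one_of_one_lt_of_neg (one_lt_two (α := ℝ)) (show (4:ℝ)-d < 0 by linarith)
    linarith
  have hK₁ : 0 < K₁ := by
    have h1 : (0:ℝ) < (2:ℝ) ^ (d-2) := Real.rpow_pos_of_pos two_pos _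
    have h2 : (0:ℝ) < (1 - (2:ℝ) ^ (-(2:ℝ)))⁻¹ := inv_pos.mpr hc1
    rw [hK₁def]; positivity
  have hK₂ : 0 < K₂ := by
    have h1 : (0:ℝ) < (2:ℝ) ^ (d:ℝ) := Real.rpow_pos_of_pos two_pos _
    have h2 : (0:ℝ) < (1 - (2:ℝ) ^ ((4:ℝ)-d))⁻¹ := inv_pos.mpr hc2
    rw [hK₂def]; positivity
  -- half-space estimate
  have half_est : ∀ x z : M, x ≠ z →
      ∫⁻ y in {y | edist x y ≤ edist y z}, edist x y ^ (2 - d) * edist y z ^ (2 - d) ∂μ ≤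
        ENNReal.ofReal ((K₁ + K₂) * dist x z ^ ((4:ℝ) - d)) := by
    intro x z hxz
    set R : ℝ := dist x z with hRdef
    have hR : 0 < R := dist_pos.mpr hxz
    set S : Set M := {y | edist x y ≤ edist y z} with hSdef
    have hsplit : S = (S ∩ Metric.ball x R) ∪ (S \ Metric.ball x R) :=
      (Set.inter_union_diff S _).symm
    have hmeas_e : Measurable fun y => edist x y ^ (2-d) :=
      measurable_edist_right.pow_const _
    -- term 1
    have term1 : ∫⁻ y in S ∩ Metric.ball x R, edist x y ^ (2 - d) * edist y z ^ (2 - d) ∂μ ≤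
        ENNReal.ofReal (((R/2) ^ ((2:ℝ)-d)) *
          ((c₇ * 2 ^ (-(2-d)) * R ^ ((2-d) + d)) * (1 - (2:ℝ) ^ (-((2-d)+d)))⁻¹)) := by
      have hpt1 : ∀ y ∈ S ∩ Metric.ball x R,
          edist x y ^ (2-d) * edist y z ^ (2-d) ≤
            ENNReal.ofReal ((R/2) ^ ((2:ℝ)-d)) * edist x y ^ (2-d) := by
        intro y hy
        have h1 : ENNReal.ofReal (R/2) ≤ edist y z := by
          have ht : edist x z ≤ 2 * edist y z := by
            calc edist x z ≤ edist x y + edist y z := edist_triangle _ _ _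
              _ ≤ edist y z + edist y z := add_le_add_left hy.1 _
              _ = 2 * edist y z := (two_mul _).symm
          have h2 : edist x z / 2 ≤ edist y z :=
            ENNReal.div_le_of_le_mul (by rw [mul_comm] at ht; exact ht)
          calc ENNReal.ofReal (R/2) = edist x z / 2 := by
                rw [edist_dist, ENNReal.ofReal_div_of_pos two_pos, ENNReal.ofReal_ofNat]
            _ ≤ edist y z := h2
        have h3 : edist y z ^ (2-d) ≤ ENNReal.ofReal ((R/2) ^ ((2:ℝ)-d)) := by
          rw [← ENNReal.ofReal_rpow_of_pos (by positivity)]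
          exact erpow_anti h1 (by linarith)
        rw [mul_comm]
        exact mul_le_mul' h3 le_rfl
      calc ∫⁻ y in S ∩ Metric.ball x R, edist x y ^ (2 - d) * edist y z ^ (2 - d) ∂μ
          ≤ ∫⁻ y in S ∩ Metric.ball x R,
              ENNReal.ofReal ((R/2) ^ ((2:ℝ)-d)) * edist x y ^ (2-d) ∂μ :=
            setLIntegral_mono (measurable_const.mul hmeas_e) hpt1
        _ ≤ ∫⁻ y in Metric.ball x R,
              ENNReal.ofReal ((R/2) ^ ((2:ℝ)-d)) * edist x y ^ (2-d) ∂μ :=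
            lintegral_mono_set inter_subset_right
        _ = ENNReal.ofReal ((R/2) ^ ((2:ℝ)-d)) *
              ∫⁻ y in Metric.ball x R, edist x y ^ (2-d) ∂μ :=
            lintegral_const_mul _ hmeas_e
        _ ≤ ENNReal.ofReal ((R/2) ^ ((2:ℝ)-d)) *
              ENNReal.ofReal ((c₇ * 2 ^ (-(2-d)) * R ^ ((2-d) + d)) *
                (1 - (2:ℝ) ^ (-((2-d)+d)))⁻¹) := by
            refine mul_le_mul_right ?_ _
            exact near_est hd0 hc₇ hvol x hR (by linarith) (by linarith)
        _ = ENNReal.ofReal (((R/2) ^ ((2:ℝ)-d)) *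
              ((c₇ * 2 ^ (-(2-d)) * R ^ ((2-d) + d)) * (1 - (2:ℝ) ^ (-((2-d)+d)))⁻¹)) :=
            (ENNReal.ofReal_mul (by positivity)).symm
    -- term 2
    have term2 : ∫⁻ y in S \ Metric.ball x R, edist x y ^ (2 - d) * edist y z ^ (2 - d) ∂μ ≤
        ENNReal.ofReal ((c₇ * 2 ^ (d:ℝ) * R ^ ((4-2*d) + d)) *
          (1 - (2:ℝ) ^ ((4-2*d)+d))⁻¹) := by
      have hpt2 : ∀ y ∈ S \ Metric.ball x R,
          edist x y ^ (2-d) * edist y z ^ (2-d) ≤ edist x y ^ ((4:ℝ)-2*d) := by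
        intro y hy
        have hyball := hy.2
        rw [Metric.mem_ball, not_lt] at hyball
        have hne : edist x y ≠ 0 := by
          rw [edist_dist, ne_eq, ENNReal.ofReal_eq_zero, not_le]
          rw [dist_comm] at hyball
          linarith
        calc edist x y ^ (2-d) * edist y z ^ (2-d)
            ≤ edist x y ^ (2-d) * edist x y ^ (2-d) :=
              mul_le_mul' le_rfl (erpow_anti hy.1 (by linarith))
          _ = edist x y ^ ((2-d) + (2-d)) :=
              (ENNReal.rpow_add _ _ hne (edist_ne_top x y)).symm
          _ = edist x y ^ ((4:ℝ)-2*d) := by rw [show ((2:ℝ)-d) + (2-d) = (4:ℝ)-2*d by ring]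
      calc ∫⁻ y in S \ Metric.ball x R, edist x y ^ (2 - d) * edist y z ^ (2 - d) ∂μ
          ≤ ∫⁻ y in S \ Metric.ball x R, edist x y ^ ((4:ℝ)-2*d) ∂μ :=
            setLIntegral_mono (measurable_edist_right.pow_const _) hpt2
        _ ≤ ∫⁻ y in (Metric.ball x R)ᶜ, edist x y ^ ((4:ℝ)-2*d) ∂μ :=
            lintegral_mono_set (fun y hy => hy.2)
        _ ≤ ENNReal.ofReal ((c₇ * 2 ^ (d:ℝ) * R ^ ((4-2*d) + d)) *
              (1 - (2:ℝ) ^ ((4-2*d)+d))⁻¹) :=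
            far_est hd0 hc₇ hvol x hR (by linarith) (by linarith)
    -- combine
    have hA : ((R/2) ^ ((2:ℝ)-d)) *
        ((c₇ * 2 ^ (-(2-d)) * R ^ ((2-d) + d)) * (1 - (2:ℝ) ^ (-((2-d)+d)))⁻¹)
        = K₁ * R ^ ((4:ℝ)-d) := by
      rw [show -((2:ℝ)-d) = d-2 by ring, show ((2:ℝ)-d)+d = (2:ℝ) by ring]
      rw [Real.div_rpow hR.le two_pos.le, div_eq_mul_inv, ← Real.rpow_neg two_pos.le,
        show -((2:ℝ)-d) = d-2 by ring]
      have hRR : R ^ ((4:ℝ)-d) = R ^ ((2:ℝ)-d) * R ^ ((2:ℝ)) := by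
        rw [← Real.rpow_add hR]; congr 1; ring
      rw [hK₁def, hRR]
      ring
    have hB : (c₇ * 2 ^ (d:ℝ) * R ^ ((4-2*d) + d)) * (1 - (2:ℝ) ^ ((4-2*d)+d))⁻¹
        = K₂ * R ^ ((4:ℝ)-d) := by
      rw [show ((4:ℝ)-2*d)+d = (4:ℝ)-d by ring, hK₂def]
      ring
    calc ∫⁻ y in S, edist x y ^ (2 - d) * edist y z ^ (2 - d) ∂μ
        ≤ (∫⁻ y in S ∩ Metric.ball x R, edist x y ^ (2 - d) * edist y z ^ (2 - d) ∂μ)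
          + ∫⁻ y in S \ Metric.ball x R, edist x y ^ (2 - d) * edist y z ^ (2 - d) ∂μ := by
          conv_lhs => rw [hsplit]
          exact lintegral_union_le _ _ _
      _ ≤ ENNReal.ofReal (((R/2) ^ ((2:ℝ)-d)) *
            ((c₇ * 2 ^ (-(2-d)) * R ^ ((2-d) + d)) * (1 - (2:ℝ) ^ (-((2-d)+d)))⁻¹))
          + ENNReal.ofReal ((c₇ * 2 ^ (d:ℝ) * R ^ ((4-2*d) + d)) *
            (1 - (2:ℝ) ^ ((4-2*d)+d))⁻¹) := add_le_add term1 term2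
      _ = ENNReal.ofReal (K₁ * R ^ ((4:ℝ)-d) + K₂ * R ^ ((4:ℝ)-d)) := by
          rw [hA, hB, ENNReal.ofReal_add (by positivity) (by positivity)]
      _ = ENNReal.ofReal ((K₁ + K₂) * R ^ ((4:ℝ)-d)) := by ring_nf
  -- part 1
  have part1 : ∀ x z : M,
      ∫⁻ y, edist x y ^ (2 - d) * edist y z ^ (2 - d) ∂μ ≤
        ENNReal.ofReal (2 * (K₁ + K₂)) * edist x z ^ (4 - d) := by
    intro x z
    rcases eq_or_ne x z with rfl | hxz
    · have h0 : edist x x ^ ((4:ℝ) - d) = ∞ := by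
        rw [edist_self, ENNReal.zero_rpow_of_neg (by linarith)]
      rw [h0, ENNReal.mul_top (by
        rw [ne_eq, ENNReal.ofReal_eq_zero, not_le]; positivity)]
      exact le_top
    · set R : ℝ := dist x z with hRdef
      have hR : 0 < R := dist_pos.mpr hxz
      set S : Set M := {y | edist x y ≤ edist y z} with hSdef
      have hcompl : Sᶜ ⊆ {y | edist z y ≤ edist y x} := by
        intro y hy
        rw [mem_compl_iff, hSdef, mem_setOf_eq, not_le] at hy
        rw [mem_setOf_eq, edist_comm z y, edist_comm y x]
        exact hy.le
      have hswap : ∫⁻ y in {y | edist z y ≤ edist y x},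
          edist x y ^ (2 - d) * edist y z ^ (2 - d) ∂μ ≤
          ENNReal.ofReal ((K₁ + K₂) * dist x z ^ ((4:ℝ) - d)) := by
        have := half_est z x hxz.symm
        rw [dist_comm z x] at this
        calc ∫⁻ y in {y | edist z y ≤ edist y x},
              edist x y ^ (2 - d) * edist y z ^ (2 - d) ∂μ
            = ∫⁻ y in {y | edist z y ≤ edist y x},
              edist z y ^ (2 - d) * edist y x ^ (2 - d) ∂μ := by
              refine lintegral_congr fun y => ?_
              rw [edist_comm z y, edist_comm y x, mul_comm]
          _ ≤ ENNReal.ofReal ((K₁ + K₂) * dist x z ^ ((4:ℝ) - d)) := this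
      calc ∫⁻ y, edist x y ^ (2 - d) * edist y z ^ (2 - d) ∂μ
          = ∫⁻ y in S ∪ Sᶜ, edist x y ^ (2 - d) * edist y z ^ (2 - d) ∂μ := by
            rw [Set.union_compl_self, setLIntegral_univ]
        _ ≤ (∫⁻ y in S, edist x y ^ (2 - d) * edist y z ^ (2 - d) ∂μ)
            + ∫⁻ y in Sᶜ, edist x y ^ (2 - d) * edist y z ^ (2 - d) ∂μ :=
            lintegral_union_le _ _ _
        _ ≤ ENNReal.ofReal ((K₁ + K₂) * R ^ ((4:ℝ)-d))
            + ENNReal.ofReal ((K₁ + K₂) * R ^ ((4:ℝ)-d)) := by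
            refine add_le_add (half_est x z hxz) ?_
            exact le_trans (lintegral_mono_set hcompl) hswap
        _ = ENNReal.ofReal (2 * (K₁ + K₂)) * edist x z ^ (4 - d) := by
            rw [edist_dist, ENNReal.ofReal_rpow_of_pos hR,
              ← ENNReal.ofReal_mul (by positivity),
              ← ENNReal.ofReal_add (by positivity) (by positivity)]
            congr 1
            ring
  refine ⟨⟨2 * (K₁ + K₂), by positivity, part1⟩,
    ⟨c₆ ^ 2 * (2 * (K₁ + K₂)), by positivity, ?_⟩⟩
  -- part 2
  intro ν hreg
  set C : ℝ := 2 * (K₁ + K₂) with hCdef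
  have hC : 0 < C := by positivity
  by_cases hI : (∫⁻ x, ∫⁻ z, edist x z ^ (4 - d) ∂ν ∂ν) = ∞
  · rw [hI, ENNReal.mul_top (by
      rw [ne_eq, ENNReal.ofReal_eq_zero, not_le]; positivity)]
    exact le_top
  rcases eq_or_ne ν 0 with rfl | hν
  · simp
  -- find a point with finite potential
  have hx₀ : ∃ x₀ : M, (∫⁻ z, edist x₀ z ^ (4 - d) ∂ν) ≠ ∞ := by
    by_contra hall
    push_neg at hall
    apply hI
    have h1 : (∫⁻ x, ∫⁻ z, edist x z ^ (4 - d) ∂ν ∂ν) = ∫⁻ _, (⊤:ℝ≥0∞) ∂ν :=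
      lintegral_congr fun x => hall x
    rw [h1, lintegral_const, ENNReal.top_mul (by
      rw [ne_eq, Measure.measure_univ_eq_zero]; exact hν)]
  obtain ⟨x₀, hx₀⟩ := hx₀
  -- ν is σ-finite
  have hνfin : ∀ n : ℕ, ν (Metric.ball x₀ ((n:ℝ)+1)) < ∞ := by
    intro n
    have hb : ∀ z ∈ Metric.ball x₀ ((n:ℝ)+1),
        ENNReal.ofReal ((((n:ℝ)+1)) ^ ((4:ℝ)-d)) ≤ edist x₀ z ^ ((4:ℝ)-d) := by
      intro z hz
      have h1 : edist x₀ z ≤ ENNReal.ofReal ((n:ℝ)+1) := by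
        rw [edist_dist]
        refine ENNReal.ofReal_le_ofReal ?_
        rw [Metric.mem_ball] at hz
        rw [dist_comm]
        exact hz.le
      calc ENNReal.ofReal ((((n:ℝ)+1)) ^ ((4:ℝ)-d))
          = (ENNReal.ofReal ((n:ℝ)+1)) ^ ((4:ℝ)-d) :=
            (ENNReal.ofReal_rpow_of_pos (by positivity : (0:ℝ) < (n:ℝ)+1)).symm
        _ ≤ edist x₀ z ^ ((4:ℝ)-d) := erpow_anti h1 (by linarith)
    have h2 : ENNReal.ofReal ((((n:ℝ)+1)) ^ ((4:ℝ)-d)) * ν (Metric.ball x₀ ((n:ℝ)+1)) ≤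
        ∫⁻ z, edist x₀ z ^ ((4:ℝ)-d) ∂ν := by
      calc ENNReal.ofReal ((((n:ℝ)+1)) ^ ((4:ℝ)-d)) * ν (Metric.ball x₀ ((n:ℝ)+1))
          = ∫⁻ _ in Metric.ball x₀ ((n:ℝ)+1),
              ENNReal.ofReal ((((n:ℝ)+1)) ^ ((4:ℝ)-d)) ∂ν := (setLIntegral_const _ _).symm
        _ ≤ ∫⁻ z in Metric.ball x₀ ((n:ℝ)+1), edist x₀ z ^ ((4:ℝ)-d) ∂ν :=
            setLIntegral_mono (measurable_edist_right.pow_const _) hb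
        _ ≤ ∫⁻ z, edist x₀ z ^ ((4:ℝ)-d) ∂ν := setLIntegral_le_lintegral _ _
    by_contra hfin
    rw [not_lt, top_le_iff] at hfin
    rw [hfin, ENNReal.mul_top (by
      rw [ne_eq, ENNReal.ofReal_eq_zero, not_le]; positivity)] at h2
    exact hx₀ (top_le_iff.mp h2)
  have hcover : ⋃₀ (Set.range fun n : ℕ => Metric.ball x₀ ((n:ℝ)+1)) = univ := by
    apply eq_univ_of_forall
    intro z
    obtain ⟨n, hn⟩ := exists_nat_gt (dist z x₀)
    exact ⟨Metric.ball x₀ ((n:ℝ)+1), ⟨n, rfl⟩, Metric.mem_ball.mpr (by linarith)⟩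
  haveI hνsf : SigmaFinite ν :=
    Measure.sigmaFinite_of_countable (Set.countable_range _)
      (by rintro s ⟨n, rfl⟩; exact hνfin n) hcover
  haveI hμsf : SigmaFinite μ :=
    Measure.sigmaFinite_of_countable (Set.countable_range fun n : ℕ => Metric.ball x₀ ((n:ℝ)+1))
      (by
        rintro s ⟨n, rfl⟩
        exact lt_of_le_of_lt (hvol x₀ _ (by positivity)) ENNReal.ofReal_lt_top) hcover
  -- σ-compact carrier via inner regularity
  have hK : ∀ n m : ℕ, ∃ K : Set M, K ⊆ Metric.ball x₀ ((n:ℝ)+1) ∧ IsCompact K ∧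
      ν (Metric.ball x₀ ((n:ℝ)+1) \ K) ≤ ENNReal.ofReal (1/((m:ℝ)+1)) := by
    intro n m
    obtain ⟨K, hKsub, hKc, hlt⟩ := hreg.innerRegular.exists_subset_lt_add
      (ε := ENNReal.ofReal (1/((m:ℝ)+1))) isCompact_empty
      measurableSet_ball (hνfin n).ne
      (by rw [ne_eq, ENNReal.ofReal_eq_zero, not_le]; positivity)
    refine ⟨K, hKsub, hKc, ?_⟩
    rw [measure_diff hKsub hKc.measurableSet.nullMeasurableSet
      (ne_top_of_le_ne_top (hνfin n).ne (measure_mono hKsub))]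
    exact tsub_le_iff_left.mpr hlt.le
  choose Kc hKsub hKcomp hKsmall using hK
  set T : Set M := ⋃ n : ℕ, ⋃ m : ℕ, Kc n m with hTdef
  have hTnull : ν Tᶜ = 0 := by
    have h1 : ∀ n : ℕ, ν (Tᶜ ∩ Metric.ball x₀ ((n:ℝ)+1)) = 0 := by
      intro n
      refine le_antisymm ?_ zero_le
      have h2 : ∀ m : ℕ, ν (Tᶜ ∩ Metric.ball x₀ ((n:ℝ)+1)) ≤ ENNReal.ofReal (1/((m:ℝ)+1)) := by
        intro m
        refine le_trans (measure_mono ?_) (hKsmall n m)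
        intro y hy
        exact ⟨hy.2, fun hyK => hy.1 (mem_iUnion.mpr ⟨n, mem_iUnion.mpr ⟨m, hyK⟩⟩)⟩
      have h3 : Tendsto (fun m : ℕ => ENNReal.ofReal (1/((m:ℝ)+1))) atTop (nhds 0) := by
        have h4 : Tendsto (fun m : ℕ => 1/((m:ℝ)+1)) atTop (nhds (0:ℝ)) :=
          tendsto_one_div_add_atTop_nhds_zero_nat
        simpa [Function.comp_def] using (ENNReal.continuous_ofReal.tendsto 0).comp h4
      exact ge_of_tendsto' h3 h2
    have h5 : Tᶜ ⊆ ⋃ n : ℕ, (Tᶜ ∩ Metric.ball x₀ ((n:ℝ)+1)) := by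
      intro y hy
      obtain ⟨n, hn⟩ := exists_nat_gt (dist y x₀)
      exact mem_iUnion.mpr ⟨n, hy, Metric.mem_ball.mpr (by linarith)⟩
    exact le_antisymm (le_trans (measure_mono h5) (measure_iUnion_null h1).le) zero_le
  have hTsep : TopologicalSpace.IsSeparable T :=
    TopologicalSpace.isSeparable_iUnion.mpr fun n =>
      TopologicalSpace.isSeparable_iUnion.mpr fun m => (hKcomp n m).isSeparable
  obtain ⟨c, hc_count, hc_sub⟩ := hTsep
  have hc_ne : c.Nonempty := by
    by_contra hce
    rw [not_nonempty_iff_eq_empty] at hce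
    rw [hce, closure_empty, subset_empty_iff] at hc_sub
    apply hν
    rw [← Measure.measure_univ_eq_zero]
    have h6 : (univ : Set M) = Tᶜ := by rw [hc_sub, compl_empty]
    rw [h6]
    exact hTnull
  obtain ⟨u, hu⟩ := hc_count.exists_eq_range hc_ne
  set S : Set M := closure (Set.range u) with hSdef2
  have hSnull : ν Sᶜ = 0 := by
    refine le_antisymm (le_trans (measure_mono ?_) hTnull.le) zero_le
    refine compl_subset_compl.mpr ?_
    rw [hSdef2, ← hu]
    exact hc_sub
  have haeS : ∀ᵐ z ∂ν, z ∈ S := by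
    rw [ae_iff]
    exact hSnull
  -- the jointly measurable kernel
  set E : M × M → ℝ≥0∞ := fun p => ⨅ i : ℕ, (edist p.1 (u i) + edist p.2 (u i)) with hEdef
  have hEmeas : Measurable E := by
    refine Measurable.iInf fun i => ?_
    exact (measurable_edist_left.comp measurable_fst).add
      (measurable_edist_left.comp measurable_snd)
  have hE : ∀ (x y : M), y ∈ S → E (x, y) = edist x y := by
    intro x y hy
    refine le_antisymm ?_ (le_iInf fun i => edist_triangle_right x y (u i))
    refine ENNReal.le_of_forall_pos_le_add fun ε hε _hlt => ?_
    obtain ⟨z, hz_mem, hz⟩ := EMetric.mem_closure_iff.mp hy ((ε:ℝ≥0∞)/2)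
      (ENNReal.half_pos (by exact_mod_cast hε.ne'))
    obtain ⟨i, rfl⟩ := hz_mem
    calc E (x, y) ≤ edist x (u i) + edist y (u i) := iInf_le _ i
      _ ≤ (edist x y + edist y (u i)) + edist y (u i) :=
          add_le_add_left (edist_triangle _ _ _) _
      _ ≤ edist x y + ((ε:ℝ≥0∞)/2 + (ε:ℝ≥0∞)/2) := by
          rw [add_assoc]
          exact add_le_add_right (add_le_add hz.le hz.le) _
      _ = edist x y + ε := by rw [ENNReal.add_halves]
  -- measurability pieces
  have hE2meas : Measurable fun p : M × M => E p ^ (2 - d) := hEmeas.pow_const _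
  have hφmeas : Measurable fun x => ∫⁻ z, E (x, z) ^ (2 - d) ∂ν :=
    Measurable.lintegral_prod_right' (f := fun p : M × M => E p ^ (2 - d)) hE2meas
  set φ : M → ℝ≥0∞ := fun x => ∫⁻ z, E (x, z) ^ (2 - d) ∂ν with hφdef
  have step0 : ∫⁻ x, (∫⁻ y, g x y ∂ν) ^ (2:ℕ) ∂μ ≤
      (ENNReal.ofReal c₆) ^ 2 * ∫⁻ x, (φ x) ^ 2 ∂μ := by
    rw [← lintegral_const_mul' _ _ (pow_ne_top ENNReal.ofReal_ne_top)]
    refine lintegral_mono fun x => ?_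
    have h1 : ∫⁻ y, g x y ∂ν ≤ ENNReal.ofReal c₆ * φ x := by
      calc ∫⁻ y, g x y ∂ν ≤ ∫⁻ y, ENNReal.ofReal c₆ * edist x y ^ (2-d) ∂ν :=
            lintegral_mono (hg x)
        _ = ∫⁻ y, ENNReal.ofReal c₆ * E (x, y) ^ (2-d) ∂ν := by
            refine lintegral_congr_ae ?_
            filter_upwards [haeS] with y hy
            rw [hE x y hy]
        _ = ENNReal.ofReal c₆ * φ x := lintegral_const_mul' _ _ ENNReal.ofReal_ne_top
    calc (∫⁻ y, g x y ∂ν) ^ (2:ℕ) ≤ (ENNReal.ofReal c₆ * φ x) ^ 2 := pow_le_pow_left' h1 2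
      _ = (ENNReal.ofReal c₆) ^ 2 * (φ x) ^ 2 := mul_pow _ _ 2
  have step1 : ∫⁻ x, (φ x) ^ 2 ∂μ =
      ∫⁻ y, ∫⁻ z, (∫⁻ x, E (x, y) ^ (2-d) * E (x, z) ^ (2-d) ∂μ) ∂ν ∂ν := by
    have e1 : ∫⁻ x, (φ x) ^ 2 ∂μ =
        ∫⁻ x, ∫⁻ y, E (x, y) ^ (2-d) * φ x ∂ν ∂μ := by
      refine lintegral_congr fun x => ?_
      rw [pow_two]
      exact (lintegral_mul_const _ ((hEmeas.comp (measurable_prodMk_left)).pow_const _)).symm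
    have e2 : ∫⁻ x, ∫⁻ y, E (x, y) ^ (2-d) * φ x ∂ν ∂μ =
        ∫⁻ y, ∫⁻ x, E (x, y) ^ (2-d) * φ x ∂μ ∂ν := by
      refine lintegral_lintegral_swap ?_
      exact (hE2meas.mul (hφmeas.comp measurable_fst)).aemeasurable
    have e3 : ∀ y : M, ∫⁻ x, E (x, y) ^ (2-d) * φ x ∂μ =
        ∫⁻ z, ∫⁻ x, E (x, y) ^ (2-d) * E (x, z) ^ (2-d) ∂μ ∂ν := by
      intro y
      have e4 : ∫⁻ x, E (x, y) ^ (2-d) * φ x ∂μ =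
          ∫⁻ x, ∫⁻ z, E (x, y) ^ (2-d) * E (x, z) ^ (2-d) ∂ν ∂μ := by
        refine lintegral_congr fun x => ?_
        exact (lintegral_const_mul _ ((hEmeas.comp (measurable_prodMk_left)).pow_const _)).symm
      rw [e4]
      refine lintegral_lintegral_swap ?_
      refine Measurable.aemeasurable ?_
      exact ((hEmeas.comp (measurable_fst.prodMk measurable_const)).pow_const _).mul hE2meas
    rw [e1, e2]
    exact lintegral_congr e3
  have step2 : ∫⁻ y, ∫⁻ z,
      (∫⁻ x, E (x, y) ^ (2-d) * E (x, z) ^ (2-d) ∂μ) ∂ν ∂ν ≤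
      ENNReal.ofReal C * ∫⁻ x, ∫⁻ z, edist x z ^ (4 - d) ∂ν ∂ν := by
    have hb : ∀ y ∈ S, ∀ z ∈ S, (∫⁻ x, E (x, y) ^ (2-d) * E (x, z) ^ (2-d) ∂μ) ≤
        ENNReal.ofReal C * edist y z ^ (4 - d) := by
      intro y hy z hz
      calc ∫⁻ x, E (x, y) ^ (2-d) * E (x, z) ^ (2-d) ∂μ
          = ∫⁻ x, edist y x ^ (2-d) * edist x z ^ (2-d) ∂μ := by
            refine lintegral_congr fun x => ?_
            rw [hE x y hy, hE x z hz, edist_comm x y]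
        _ ≤ ENNReal.ofReal C * edist y z ^ (4 - d) := part1 y z
    calc ∫⁻ y, ∫⁻ z, (∫⁻ x, E (x, y) ^ (2-d) * E (x, z) ^ (2-d) ∂μ) ∂ν ∂ν
        ≤ ∫⁻ y, ∫⁻ z, ENNReal.ofReal C * edist y z ^ (4 - d) ∂ν ∂ν := by
          refine lintegral_mono_ae ?_
          filter_upwards [haeS] with y hy
          refine lintegral_mono_ae ?_
          filter_upwards [haeS] with z hz
          exact hb y hy z hz
      _ = ENNReal.ofReal C * ∫⁻ y, ∫⁻ z, edist y z ^ (4 - d) ∂ν ∂ν := by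
          rw [← lintegral_const_mul' _ _ ENNReal.ofReal_ne_top]
          exact lintegral_congr fun y => lintegral_const_mul' _ _ ENNReal.ofReal_ne_top
  calc ∫⁻ x, (∫⁻ y, g x y ∂ν) ^ (2:ℕ) ∂μ
      ≤ (ENNReal.ofReal c₆) ^ 2 * ∫⁻ x, (φ x) ^ 2 ∂μ := step0
    _ ≤ (ENNReal.ofReal c₆) ^ 2 *
        (ENNReal.ofReal C * ∫⁻ x, ∫⁻ z, edist x z ^ (4 - d) ∂ν ∂ν) := by
        rw [step1]
        exact mul_le_mul_right step2 _
    _ = ENNReal.ofReal (c₆ ^ 2 * C) * ∫⁻ x, ∫⁻ z, edist x z ^ (4 - d) ∂ν ∂ν := by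
        rw [← mul_assoc, ← ENNReal.ofReal_pow hc₆.le, ← ENNReal.ofReal_mul (by positivity)]
    _ = ENNReal.ofReal (c₆ ^ 2 * (2 * (K₁ + K₂))) * ∫⁻ x, ∫⁻ z, edist x z ^ (4 - d) ∂ν ∂ν := by
        rw [hCdef]
end

section
/- Let 1 < p < ∞, 1/p + 1/q = 1, s > 0, and suppose c₇^{-1} r^d ≤ μ(B(x,r)) ≤ c₇ r^d for all x ∈ M, r > 0. Then for every nonnegative Radon measure ν, the fractional maximal function M_s ν(x) := sup_{r>0} r^{−s} ν(B(x,r)) satisfies ‖M_s ν‖_{L^q(M)}^q ≤ C ∫_M Ẇ_{s,p}^ν dν, where Ẇ_{s,p}^ν(x) := Σ_{j∈ℤ} 2^{jsq} ∫_{B(x,2^{−j})} ν(B(y,2^{−j}))^{q−1} dμ(y) is the Wolff potential. -/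
open Set MeasureTheory ENNReal Metric

/-- An Ahlfors-regular metric measure space is second countable. -/
lemma aux_sc {M : Type*} [MetricSpace M] [MeasurableSpace M] [BorelSpace M]
    (μ : Measure M) (d c₇ : ℝ)
    (hvol : ∀ (x : M) (r : ℝ), 0 < r →
      ENNReal.ofReal (c₇⁻¹ * r ^ d) ≤ μ (Metric.ball x r) ∧
      μ (Metric.ball x r) ≤ ENNReal.ofReal (c₇ * r ^ d)) (hc₇ : 0 < c₇) :
    SecondCountableTopology M := by
  rcases isEmpty_or_nonempty M with hM | hM
  · exact Metric.secondCountable_of_almost_dense_set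
      (fun ε hε => ⟨∅, countable_empty, fun x => isEmptyElim x⟩)
  obtain ⟨x₀⟩ := hM
  apply Metric.secondCountable_of_almost_dense_set
  intro ε hε
  have claim : ∀ n : ℕ, ∃ F : Set M, F.Finite ∧
      ∀ x ∈ ball x₀ (n : ℝ), ∃ y ∈ F, dist x y ≤ ε := by
    intro n
    by_contra hcon
    push_neg at hcon
    have key : ∀ F : Finset M, ∃ x, x ∈ ball x₀ (n : ℝ) ∧ ∀ y ∈ F, ε < dist x y := by
      intro F
      obtain ⟨x, hx, hx2⟩ := hcon (F : Set M) F.finite_toSet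
      exact ⟨x, hx, fun y hy => hx2 y hy⟩
    classical
    choose g hg1 hg2 using key
    set F : ℕ → Finset M := fun k => Nat.rec ∅ (fun _ Fk => insert (g Fk) Fk) k with hF
    set f : ℕ → M := fun k => g (F k) with hf
    have hFsucc : ∀ k, F (k + 1) = insert (f k) (F k) := fun k => rfl
    have hmem : ∀ i j, i < j → f i ∈ F j := by
      intro i j hij
      induction j with
      | zero => omega
      | succ j ih =>
        rw [hFsucc]
        rcases Nat.lt_succ_iff_lt_or_eq.mp hij with h | h
        · exact Finset.mem_insert_of_mem (ih h)
        · subst h; exact Finset.mem_insert_self _ _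
    have hsep : ∀ i j, i < j → ε < dist (f j) (f i) := fun i j hij =>
      hg2 (F j) (f i) (hmem i j hij)
    have hdisj : Pairwise (Function.onFun Disjoint fun i => ball (f i) (ε / 2)) := by
      intro i j hij
      rcases hij.lt_or_gt with h | h
      · refine ball_disjoint_ball ?_
        have := hsep i j h
        rw [dist_comm] at this
        linarith
      · exact ball_disjoint_ball (by linarith [hsep j i h])
    have h1 : (⊤ : ℝ≥0∞) ≤ μ (⋃ i, ball (f i) (ε / 2)) := by
      rw [measure_iUnion hdisj fun i => measurableSet_ball]
      have hne : ENNReal.ofReal (c₇⁻¹ * (ε / 2) ^ d) ≠ 0 := by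
        rw [Ne, ENNReal.ofReal_eq_zero, not_le]
        positivity
      calc (⊤ : ℝ≥0∞) = ∑' _ : ℕ, ENNReal.ofReal (c₇⁻¹ * (ε / 2) ^ d) :=
            (ENNReal.tsum_const_eq_top_of_ne_zero hne).symm
        _ ≤ ∑' i, μ (ball (f i) (ε / 2)) :=
            ENNReal.tsum_le_tsum fun i => (hvol (f i) (ε / 2) (half_pos hε)).1
    have h2 : μ (⋃ i, ball (f i) (ε / 2)) ≤ ENNReal.ofReal (c₇ * ((n : ℝ) + ε) ^ d) := by
      refine le_trans (measure_mono ?_) (hvol x₀ ((n : ℝ) + ε) (by positivity)).2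
      rintro z hz
      simp only [mem_iUnion] at hz
      obtain ⟨i, hi⟩ := hz
      have h3 := hg1 (F i)
      rw [mem_ball] at *
      calc dist z x₀ ≤ dist z (f i) + dist (f i) x₀ := dist_triangle _ _ _
        _ < ε / 2 + n := add_lt_add hi h3
        _ ≤ n + ε := by linarith
    exact absurd (top_le_iff.mp (h1.trans h2)) ENNReal.ofReal_ne_top
  choose Fn hFnfin hFn using claim
  refine ⟨⋃ n, Fn n, countable_iUnion fun n => (hFnfin n).countable, fun x => ?_⟩
  obtain ⟨n, hn⟩ := exists_nat_gt (dist x x₀)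
  obtain ⟨y, hy, hxy⟩ := hFn n x (mem_ball.mpr hn)
  exact ⟨y, mem_iUnion.mpr ⟨n, hy⟩, hxy⟩

/-- Pointwise dyadic bound for the fractional maximal function. -/
lemma aux_ptwise {M : Type*} [MetricSpace M] [MeasurableSpace M] (ν : Measure M)
    (q s : ℝ) (hq : 1 < q) (hs : 0 < s) (x : M) :
    (⨆ (r : ℝ) (_ : 0 < r), ν (Metric.ball x r) / ENNReal.ofReal (r ^ s)) ^ q ≤
      (2:ℝ≥0∞) ^ (s*q) * ∑' j : ℤ, (2:ℝ≥0∞) ^ ((j:ℝ)*s*q) *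
        (ν (Metric.ball x ((2:ℝ) ^ (-(j:ℝ))))) ^ q := by
  have hq0 : 0 < q := lt_trans one_pos hq
  set B := ∑' j : ℤ, (2:ℝ≥0∞) ^ ((j:ℝ)*s*q) * (ν (Metric.ball x ((2:ℝ) ^ (-(j:ℝ))))) ^ q with hB
  suffices h : (⨆ (r : ℝ) (_ : 0 < r), ν (Metric.ball x r) / ENNReal.ofReal (r ^ s)) ≤
      ((2:ℝ≥0∞) ^ (s*q) * B) ^ (1/q) by
    have h2 := ENNReal.rpow_le_rpow h hq0.le
    rwa [← ENNReal.rpow_mul, one_div_mul_cancel hq0.ne', ENNReal.rpow_one] at h2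
  refine iSup₂_le fun r hr => ?_
  set t := Real.logb 2 r with ht
  set j : ℤ := -⌈t⌉ with hj
  have hjt : -(j:ℝ) = (⌈t⌉ : ℝ) := by simp [hj]
  set R : ℝ := (2:ℝ)^(-(j:ℝ)) with hR
  have hRpos : 0 < R := Real.rpow_pos_of_pos two_pos _
  have h2r : (2:ℝ)^t = r := Real.rpow_logb two_pos (by norm_num) hr
  have hrR : r ≤ R := by
    rw [← h2r, hR, hjt]
    exact Real.rpow_le_rpow_of_exponent_le one_le_two (Int.le_ceil t)
  have hRr : R ≤ 2*r := by
    rw [hR, hjt, ← h2r]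
    have h1 : ((⌈t⌉:ℝ)) ≤ t + 1 := by linarith [Int.ceil_lt_add_one t]
    calc (2:ℝ)^((⌈t⌉:ℝ)) ≤ 2^(t+1) := Real.rpow_le_rpow_of_exponent_le one_le_two h1
      _ = 2 * 2^t := by rw [Real.rpow_add two_pos, Real.rpow_one]; ring
  set a := ν (Metric.ball x R) with ha
  have step1 : ν (Metric.ball x r) / ENNReal.ofReal (r^s) ≤ a / ENNReal.ofReal ((R/2)^s) := by
    apply ENNReal.div_le_div (measure_mono (ball_subset_ball hrR))
    apply ENNReal.ofReal_le_ofReal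
    exact Real.rpow_le_rpow (by positivity) (by linarith) hs.le
  have hden : ENNReal.ofReal ((R/2)^s) = (2:ℝ≥0∞) ^ ((-(j:ℝ)-1)*s) := by
    have h1 : R/2 = (2:ℝ)^(-(j:ℝ)-1) := by rw [hR, Real.rpow_sub two_pos, Real.rpow_one]
    rw [h1, ← Real.rpow_mul (by norm_num : (0:ℝ) ≤ 2),
      ← ENNReal.ofReal_rpow_of_pos two_pos, ENNReal.ofReal_ofNat]
  have hdiv : a / ENNReal.ofReal ((R/2)^s) = a * (2:ℝ≥0∞)^(((j:ℝ)+1)*s) := by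
    rw [hden, div_eq_mul_inv, ← ENNReal.rpow_neg,
      show -((-(j:ℝ)-1)*s) = ((j:ℝ)+1)*s by ring]
  have hterm : (2:ℝ≥0∞)^((j:ℝ)*s*q) * a^q ≤ B := by
    rw [hB, ha, hR]; exact ENNReal.le_tsum j
  have e1 : ((2:ℝ≥0∞)^(s*q))^(1/q) = (2:ℝ≥0∞)^s := by
    rw [← ENNReal.rpow_mul, show s*q*(1/q) = s by field_simp]
  have e2 : ((2:ℝ≥0∞)^((j:ℝ)*s*q))^(1/q) = (2:ℝ≥0∞)^((j:ℝ)*s) := by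
    rw [← ENNReal.rpow_mul, show (j:ℝ)*s*q*(1/q) = (j:ℝ)*s by field_simp]
  have e3 : (a^q)^(1/q) = a := by
    rw [← ENNReal.rpow_mul, mul_one_div_cancel hq0.ne', ENNReal.rpow_one]
  calc ν (Metric.ball x r) / ENNReal.ofReal (r^s)
      ≤ a * (2:ℝ≥0∞)^(((j:ℝ)+1)*s) := step1.trans_eq hdiv
    _ = ((2:ℝ≥0∞) ^ (s*q) * ((2:ℝ≥0∞)^((j:ℝ)*s*q) * a^q))^(1/q) := by
        rw [ENNReal.mul_rpow_of_nonneg _ _ (by positivity : (0:ℝ) ≤ 1/q),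
          ENNReal.mul_rpow_of_nonneg _ _ (by positivity : (0:ℝ) ≤ 1/q),
          e1, e2, e3,
          show ((j:ℝ)+1)*s = (j:ℝ)*s + s by ring,
          ENNReal.rpow_add _ _ (by norm_num) (by norm_num)]
        ring
    _ ≤ ((2:ℝ≥0∞) ^ (s*q) * B)^(1/q) :=
        ENNReal.rpow_le_rpow (mul_le_mul_right hterm _) (by positivity)

/-- Fubini step. -/
lemma aux_fubini {M : Type*} [MetricSpace M] [MeasurableSpace M] [BorelSpace M]
    [SecondCountableTopology M]
    (μ ν : Measure M) [SigmaFinite μ] [SigmaFinite ν] (q : ℝ) (hq : 1 < q) (R : ℝ)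
    (hfin : ∀ (y : M) (r : ℝ), ν (Metric.ball y r) < ⊤) :
    ∫⁻ x, (ν (Metric.ball x R)) ^ q ∂μ =
      ∫⁻ x, ∫⁻ y in Metric.ball x R, (ν (Metric.ball y R)) ^ (q-1) ∂μ ∂ν := by
  have hq0 : 0 < q := lt_trans one_pos hq
  have hg : Measurable fun x : M => ν (Metric.ball x R) := by
    have hsmeas : MeasurableSet {p : M × M | dist p.2 p.1 < R} :=
      (isOpen_lt (continuous_dist.comp (continuous_snd.prodMk continuous_fst))
        continuous_const).measurableSet
    exact measurable_measure_prodMk_left (ν := ν) hsmeas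
  have hgq : Measurable fun x : M => (ν (Metric.ball x R)) ^ (q-1) :=
    ENNReal.continuous_rpow_const.measurable.comp hg
  set f2 : M → M → ℝ≥0∞ :=
    fun x y => if dist x y < R then (ν (Metric.ball x R)) ^ (q-1) else 0 with hf2
  have hmeas : Measurable (Function.uncurry f2) := by
    apply Measurable.ite
    · exact (isOpen_lt continuous_dist continuous_const).measurableSet
    · exact hgq.comp measurable_fst
    · exact measurable_const
  have hsplit : ∀ b : ℝ≥0∞, b ≠ ⊤ → b ^ q = b * b ^ (q-1) := by
    intro b hb
    rcases eq_or_ne b 0 with rfl | h0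
    · rw [ENNReal.zero_rpow_of_pos hq0, ENNReal.zero_rpow_of_pos (by linarith), mul_zero]
    · conv_lhs => rw [show q = 1 + (q-1) by ring]
      rw [ENNReal.rpow_add _ _ h0 hb, ENNReal.rpow_one]
  classical
  calc ∫⁻ x, (ν (Metric.ball x R)) ^ q ∂μ
      = ∫⁻ x, ∫⁻ y, f2 x y ∂ν ∂μ := by
        refine lintegral_congr fun x => ?_
        have h1 : ∀ y : M, f2 x y =
            (Metric.ball x R).indicator (fun _ => (ν (Metric.ball x R)) ^ (q-1)) y := by
          intro y
          rw [Set.indicator_apply, Metric.mem_ball, dist_comm]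
        simp_rw [h1]
        rw [lintegral_indicator measurableSet_ball, setLIntegral_const,
          hsplit _ (hfin x R).ne, mul_comm]
    _ = ∫⁻ y, ∫⁻ x, f2 x y ∂μ ∂ν := lintegral_lintegral_swap hmeas.aemeasurable
    _ = ∫⁻ x, ∫⁻ y in Metric.ball x R, (ν (Metric.ball y R)) ^ (q-1) ∂μ ∂ν := by
        refine lintegral_congr fun y => ?_
        have h1 : ∀ x : M, f2 x y =
            (Metric.ball y R).indicator (fun x => (ν (Metric.ball x R)) ^ (q-1)) x := by
          intro x
          rw [Set.indicator_apply, Metric.mem_ball]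
        simp_rw [h1]
        rw [lintegral_indicator measurableSet_ball]

/-- Wolff inequality: if `μ` is Ahlfors `d`-regular
(`c₇⁻¹ r^d ≤ μ(B(x,r)) ≤ c₇ r^d`), `1 < p < ∞` with conjugate `q`, `s > 0`, then there
is `C > 0` such that for every nonnegative Radon measure `ν` the fractional maximal
function `M_s ν(x) = sup_{r>0} r^{-s} ν(B(x,r))` satisfies
`‖M_s ν‖_{L^q(μ)}^q ≤ C ∫ Ẇ_{s,p}^ν dν`, where
`Ẇ_{s,p}^ν(x) = Σ_{j∈ℤ} 2^{jsq} ∫_{B(x,2^{-j})} ν(B(y,2^{-j}))^{q-1} dμ(y)`. -/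
theorem stmt14 {M : Type*} [MetricSpace M] [MeasurableSpace M] [BorelSpace M]
    (μ : Measure M) (p q s d c₇ : ℝ)
    (hp : 1 < p) (hconj : 1 / p + 1 / q = 1) (hs : 0 < s) (hc₇ : 0 < c₇)
    (hvol : ∀ (x : M) (r : ℝ), 0 < r →
      ENNReal.ofReal (c₇⁻¹ * r ^ d) ≤ μ (Metric.ball x r) ∧
      μ (Metric.ball x r) ≤ ENNReal.ofReal (c₇ * r ^ d)) :
    ∃ C : ℝ, 0 < C ∧ ∀ ν : Measure M,
      ∫⁻ x, (⨆ (r : ℝ) (_ : 0 < r), ν (Metric.ball x r) / ENNReal.ofReal (r ^ s)) ^ q ∂μ ≤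
        ENNReal.ofReal C *
          ∫⁻ x, ∑' j : ℤ, (2:ℝ≥0∞) ^ ((j : ℝ) * s * q) *
            ∫⁻ y in Metric.ball x ((2:ℝ) ^ (-(j:ℝ))),
              ν (Metric.ball y ((2:ℝ) ^ (-(j:ℝ)))) ^ (q - 1) ∂μ ∂ν := by
  have hp0 : 0 < p := lt_trans one_pos hp
  have h1p : 1/p < 1 := (div_lt_one hp0).mpr hp
  have h1p0 : 0 < 1/p := by positivity
  have hq0 : 0 < q := by
    have : 0 < 1/q := by linarith
    exact one_div_pos.mp this
  have hq1 : 1 < q := by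
    have : 1/q < 1 := by linarith
    rw [div_lt_one hq0] at this
    exact this
  haveI := aux_sc μ d c₇ hvol hc₇
  haveI : IsLocallyFiniteMeasure μ :=
    ⟨fun x => ⟨ball x 1, ball_mem_nhds x one_pos,
      ((hvol x 1 one_pos).2.trans_lt ENNReal.ofReal_lt_top)⟩⟩
  have h2t : ∀ u : ℝ, (2:ℝ≥0∞)^u ≠ ⊤ := fun u => by
    simp [ENNReal.rpow_eq_top_iff]
  have h2z : ∀ u : ℝ, (2:ℝ≥0∞)^u ≠ 0 := fun u => by
    simp [ENNReal.rpow_eq_zero_iff]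
  have hC : ENNReal.ofReal ((2:ℝ)^(s*q)) = (2:ℝ≥0∞)^(s*q) := by
    rw [← ENNReal.ofReal_rpow_of_pos two_pos, ENNReal.ofReal_ofNat]
  refine ⟨(2:ℝ)^(s*q), Real.rpow_pos_of_pos two_pos _, fun ν => ?_⟩
  by_cases hfin : ∀ (y : M) (r : ℝ), ν (Metric.ball y r) < ⊤
  · -- finite-on-balls case
    haveI : IsLocallyFiniteMeasure ν :=
      ⟨fun x => ⟨ball x 1, ball_mem_nhds x one_pos, hfin x 1⟩⟩
    have hg : ∀ R : ℝ, Measurable fun x : M => ν (Metric.ball x R) := by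
      intro R
      have hsmeas : MeasurableSet {p : M × M | dist p.2 p.1 < R} :=
        (isOpen_lt (continuous_dist.comp (continuous_snd.prodMk continuous_fst))
          continuous_const).measurableSet
      exact measurable_measure_prodMk_left (ν := ν) hsmeas
    have hT : ∀ R : ℝ, Measurable fun x : M =>
        ∫⁻ y in Metric.ball x R, (ν (Metric.ball y R)) ^ (q-1) ∂μ := by
      intro R
      classical
      have hgq : Measurable fun y : M => (ν (Metric.ball y R)) ^ (q-1) :=
        ENNReal.continuous_rpow_const.measurable.comp (hg R)
      set f3 : M → M → ℝ≥0∞ :=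
        fun x y => if dist y x < R then (ν (Metric.ball y R)) ^ (q-1) else 0 with hf3
      have hmeas3 : Measurable (Function.uncurry f3) := by
        apply Measurable.ite
        · exact (isOpen_lt (continuous_dist.comp (continuous_snd.prodMk continuous_fst))
            continuous_const).measurableSet
        · exact hgq.comp measurable_snd
        · exact measurable_const
      have hthis := Measurable.lintegral_prod_right' (ν := μ) hmeas3
      have heq : (fun x : M => ∫⁻ y in Metric.ball x R, (ν (Metric.ball y R)) ^ (q-1) ∂μ)
          = fun x : M => ∫⁻ y, f3 x y ∂μ := by
        funext x
        rw [← lintegral_indicator measurableSet_ball]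
        refine lintegral_congr fun y => ?_
        rw [Set.indicator_apply, Metric.mem_ball]
      rw [heq]
      exact hthis
    calc ∫⁻ x, (⨆ (r : ℝ) (_ : 0 < r), ν (Metric.ball x r) / ENNReal.ofReal (r ^ s)) ^ q ∂μ
        ≤ ∫⁻ x, (2:ℝ≥0∞) ^ (s*q) * ∑' j : ℤ, (2:ℝ≥0∞) ^ ((j:ℝ)*s*q) *
            (ν (Metric.ball x ((2:ℝ) ^ (-(j:ℝ))))) ^ q ∂μ :=
          lintegral_mono fun x => aux_ptwise ν q s hq1 hs x
      _ = (2:ℝ≥0∞) ^ (s*q) * ∑' j : ℤ, (2:ℝ≥0∞) ^ ((j:ℝ)*s*q) *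
            ∫⁻ x, (ν (Metric.ball x ((2:ℝ) ^ (-(j:ℝ))))) ^ q ∂μ := by
          rw [lintegral_const_mul' _ _ (h2t _)]
          congr 1
          have hpowm : ∀ R : ℝ, Measurable fun x : M => (ν (Metric.ball x R)) ^ q :=
            fun R => ENNReal.continuous_rpow_const.measurable.comp (hg R)
          have hmj : ∀ j : ℤ, AEMeasurable (fun x : M => (2:ℝ≥0∞) ^ ((j:ℝ)*s*q) *
              (ν (Metric.ball x ((2:ℝ) ^ (-(j:ℝ))))) ^ q) μ :=
            fun j => ((hpowm _).const_mul _).aemeasurable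
          rw [lintegral_tsum hmj]
          exact tsum_congr fun j => lintegral_const_mul' _ _ (h2t _)
      _ = (2:ℝ≥0∞) ^ (s*q) * ∑' j : ℤ, (2:ℝ≥0∞) ^ ((j:ℝ)*s*q) *
            ∫⁻ x, ∫⁻ y in Metric.ball x ((2:ℝ) ^ (-(j:ℝ))),
              (ν (Metric.ball y ((2:ℝ) ^ (-(j:ℝ))))) ^ (q-1) ∂μ ∂ν := by
          congr 1
          exact tsum_congr fun j => by rw [aux_fubini μ ν q hq1 _ hfin]
      _ = (2:ℝ≥0∞) ^ (s*q) * ∫⁻ x, ∑' j : ℤ, (2:ℝ≥0∞) ^ ((j:ℝ)*s*q) *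
            ∫⁻ y in Metric.ball x ((2:ℝ) ^ (-(j:ℝ))),
              (ν (Metric.ball y ((2:ℝ) ^ (-(j:ℝ))))) ^ (q-1) ∂μ ∂ν := by
          congr 1
          have hmj2 : ∀ j : ℤ, AEMeasurable (fun x : M => (2:ℝ≥0∞) ^ ((j:ℝ)*s*q) *
              ∫⁻ y in Metric.ball x ((2:ℝ) ^ (-(j:ℝ))),
                (ν (Metric.ball y ((2:ℝ) ^ (-(j:ℝ))))) ^ (q-1) ∂μ) ν :=
            fun j => ((hT _).const_mul _).aemeasurable
          rw [lintegral_tsum hmj2]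
          exact tsum_congr fun j => (lintegral_const_mul' _ _ (h2t _)).symm
      _ = ENNReal.ofReal ((2:ℝ)^(s*q)) * ∫⁻ x, ∑' j : ℤ, (2:ℝ≥0∞) ^ ((j:ℝ)*s*q) *
            ∫⁻ y in Metric.ball x ((2:ℝ) ^ (-(j:ℝ))),
              (ν (Metric.ball y ((2:ℝ) ^ (-(j:ℝ))))) ^ (q-1) ∂μ ∂ν := by rw [hC]
  · -- some ball has infinite measure: RHS is infinite
    push_neg at hfin
    obtain ⟨y₀, r₀, hinf'⟩ := hfin
    have hinf : ν (Metric.ball y₀ r₀) = ⊤ := top_le_iff.mp hinf'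
    have hr₀ : 0 < r₀ := by
      by_contra h
      rw [ball_eq_empty.mpr (le_of_not_gt h)] at hinf
      simp at hinf
    obtain ⟨n, hn⟩ := pow_unbounded_of_one_lt (2*r₀) (one_lt_two (α := ℝ))
    set j : ℤ := -(n:ℤ) with hjdef
    set R : ℝ := (2:ℝ)^(-(j:ℝ)) with hRdef
    have hRn : R = (2:ℝ)^n := by
      rw [hRdef]
      have hje : -((j:ℤ):ℝ) = (n:ℝ) := by rw [hjdef]; push_cast; ring
      rw [hje, Real.rpow_natCast]
    have h2R : 2*r₀ ≤ R := by rw [hRn]; exact hn.le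
    have hμpos : μ (Metric.ball y₀ r₀) ≠ 0 := by
      intro h0
      have h := (hvol y₀ r₀ hr₀).1
      rw [h0, le_zero_iff, ENNReal.ofReal_eq_zero] at h
      exact absurd h (not_le.mpr (by positivity))
    have hball : ∀ z ∈ Metric.ball y₀ r₀, Metric.ball y₀ r₀ ⊆ Metric.ball z R := by
      intro z hz w hw
      rw [mem_ball] at *
      calc dist w z ≤ dist w y₀ + dist y₀ z := dist_triangle _ _ _
        _ < r₀ + r₀ := add_lt_add hw (by rw [dist_comm]; exact hz)
        _ ≤ R := by linarith
    have hterm : ∀ x ∈ Metric.ball y₀ r₀,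
        (∫⁻ y in Metric.ball x R, ν (Metric.ball y R) ^ (q-1) ∂μ) = ⊤ := by
      intro x hx
      refine top_le_iff.mp ?_
      calc (⊤:ℝ≥0∞) = ⊤ * μ (Metric.ball y₀ r₀) := (ENNReal.top_mul hμpos).symm
        _ = ∫⁻ _ in Metric.ball y₀ r₀, ⊤ ∂μ := (setLIntegral_const _ _).symm
        _ = ∫⁻ y in Metric.ball y₀ r₀, ν (Metric.ball y R) ^ (q-1) ∂μ := by
            refine setLIntegral_congr_fun measurableSet_ball (fun y hy => ?_)
            have hν : ν (Metric.ball y R) = ⊤ := top_le_iff.mp (hinf ▸ measure_mono (hball y hy))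
            rw [hν, ENNReal.top_rpow_of_pos (by linarith)]
        _ ≤ ∫⁻ y in Metric.ball x R, ν (Metric.ball y R) ^ (q-1) ∂μ :=
            lintegral_mono' (Measure.restrict_mono (hball x hx) le_rfl) le_rfl
    have hbig : (∫⁻ x, ∑' j' : ℤ, (2:ℝ≥0∞) ^ ((j':ℝ)*s*q) *
        ∫⁻ y in Metric.ball x ((2:ℝ)^(-(j':ℝ))),
          ν (Metric.ball y ((2:ℝ)^(-(j':ℝ)))) ^ (q-1) ∂μ ∂ν) = ⊤ := by
      refine top_le_iff.mp ?_
      calc (⊤:ℝ≥0∞) = ⊤ * ν (Metric.ball y₀ r₀) := by rw [hinf, ENNReal.top_mul_top]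
        _ = ∫⁻ _ in Metric.ball y₀ r₀, ⊤ ∂ν := (setLIntegral_const _ _).symm
        _ = ∫⁻ x in Metric.ball y₀ r₀, (∑' j' : ℤ, (2:ℝ≥0∞) ^ ((j':ℝ)*s*q) *
              ∫⁻ y in Metric.ball x ((2:ℝ)^(-(j':ℝ))),
                ν (Metric.ball y ((2:ℝ)^(-(j':ℝ)))) ^ (q-1) ∂μ) ∂ν := by
            refine setLIntegral_congr_fun measurableSet_ball (fun x hx => ?_)
            refine (top_le_iff.mp ?_).symm
            calc (⊤:ℝ≥0∞) = (2:ℝ≥0∞)^((j:ℝ)*s*q) * ⊤ := (ENNReal.mul_top (h2z _)).symm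
              _ = (2:ℝ≥0∞)^((j:ℝ)*s*q) *
                  ∫⁻ y in Metric.ball x R, ν (Metric.ball y R) ^ (q-1) ∂μ := by
                    rw [hterm x hx]
              _ ≤ ∑' j' : ℤ, (2:ℝ≥0∞) ^ ((j':ℝ)*s*q) *
                  ∫⁻ y in Metric.ball x ((2:ℝ)^(-(j':ℝ))),
                    ν (Metric.ball y ((2:ℝ)^(-(j':ℝ)))) ^ (q-1) ∂μ := by
                    rw [hRdef]
                    exact ENNReal.le_tsum j
        _ ≤ ∫⁻ x, ∑' j' : ℤ, (2:ℝ≥0∞) ^ ((j':ℝ)*s*q) *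
              ∫⁻ y in Metric.ball x ((2:ℝ)^(-(j':ℝ))),
                ν (Metric.ball y ((2:ℝ)^(-(j':ℝ)))) ^ (q-1) ∂μ ∂ν :=
            lintegral_mono' Measure.restrict_le_self le_rfl
    rw [hbig, ENNReal.mul_top]
    · exact le_top
    · rw [Ne, ENNReal.ofReal_eq_zero, not_le]
      positivity
end
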